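/- arXiv:1012.1130 — 2 statements merged into one kernel-verified Lean document; each statement's English description precedes it below -/
import Mathlib

section
/- Let a, b : ℕ → ℤ∖{0} be injective sequences. Then there exist a probability space (X,𝒳,μ), commuting-free (in general non-commuting) measure preserving transformations T, S : X → X, both Bernoulli, and functions f, g ∈ L^∞(μ), such that the averages (1/N) ∑_{n=1}^N ∫ T^{a(n)} f · S^{b(n)} g dμ diverge as N → ∞; moreover there exists A ∈ 𝒳 with μ(A) > 0 and μ(T^{−a(n)}A ∩ S^{−b(n)}A) = 0 for every n ∈ ℕ. -/
open Filter MeasureTheory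

/-- A measure preserving transformation is *Bernoulli* if the system it generates is
measurably isomorphic (mod 0) to a Bernoulli shift on finitely many symbols. -/
def IsBernoulli {X : Type*} [MeasurableSpace X] (μ : Measure X) (T : X → X) : Prop :=
  ∃ (k : ℕ), 0 < k ∧ ∃ (p : Fin k → ℝ), (∀ i, 0 ≤ p i) ∧ (∑ i, p i = 1) ∧
    ∃ (ν : Measure (ℤ → Fin k)), IsProbabilityMeasure ν ∧
      (∀ (s : Finset ℤ) (f : ℤ → Fin k),
        ν {x | ∀ i ∈ s, x i = f i} = ENNReal.ofReal (∏ i ∈ s, p (f i))) ∧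
      ∃ (Φ : X → (ℤ → Fin k)) (Ψ : (ℤ → Fin k) → X),
        MeasurePreserving Φ μ ν ∧ MeasurePreserving Ψ ν μ ∧
        (∀ᵐ x ∂μ, Ψ (Φ x) = x) ∧ (∀ᵐ y ∂ν, Φ (Ψ y) = y) ∧
        (∀ᵐ x ∂μ, Φ (T x) = fun i => Φ x (i + 1))

section Aux


/-- An auxiliary greedy matching: a permutation of `ℕ` avoiding a partially injective map. -/
lemma exists_perm_avoid (S : Set ℕ) (F : ℕ → ℕ) (hF : Set.InjOn F S) :
    ∃ e : Equiv.Perm ℕ, ∀ n ∈ S, e n ≠ F n := by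
  classical
  set Bad : ℕ → ℕ → Prop := fun x y => x = y ∨ (x ∈ S ∧ F x = y) ∨ (y ∈ S ∧ F y = x) with hBad
  have hBadfin : ∀ x, {y | Bad x y}.Finite := by
    intro x
    have h0 : ({y | x = y} : Set ℕ).Finite := by
      apply (Set.finite_singleton x).subset; rintro y rfl; simp
    have h1 : {y | x ∈ S ∧ F x = y}.Finite := by
      apply (Set.finite_singleton (F x)).subset; rintro y ⟨_, rfl⟩; simp
    have h2 : {y | y ∈ S ∧ F y = x}.Finite := by
      apply Set.Subsingleton.finite
      intro y hy y' hy'; exact hF hy.1 hy'.1 (hy.2.trans hy'.2.symm)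
    refine ((h0.union h1).union h2).subset ?_
    intro y hy; rcases hy with h | h | h
    · exact Or.inl (Or.inl h)
    · exact Or.inl (Or.inr h)
    · exact Or.inr h
  have hex : ∀ (u : Finset ℕ), {n | n ∉ u}.Nonempty := by
    intro u
    exact (Set.Finite.infinite_compl u.finite_toSet).nonempty
  have hexY : ∀ (u : Finset ℕ) (x : ℕ), {n | n ∉ u ∧ ¬ Bad x n}.Nonempty := by
    intro u x
    have : ((↑u : Set ℕ) ∪ {y | Bad x y}).Finite := u.finite_toSet.union (hBadfin x)
    obtain ⟨n, hn⟩ := this.infinite_compl.nonempty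
    exact ⟨n, fun h => hn (Or.inl h), fun h => hn (Or.inr h)⟩
  set X : Finset ℕ → ℕ := fun u => sInf {n | n ∉ u} with hX
  set Y : Finset ℕ → ℕ := fun u => sInf {n | n ∉ u ∧ ¬ Bad (X u) n} with hY
  set U : ℕ → Finset ℕ := fun k => Nat.rec ∅ (fun _ u => insert (X u) (insert (Y u) u)) k with hU
  set x : ℕ → ℕ := fun k => X (U k) with hx
  set y : ℕ → ℕ := fun k => Y (U k) with hy
  have hUsucc : ∀ k, U (k+1) = insert (x k) (insert (y k) (U k)) := fun k => rfl
  have hxU : ∀ k, x k ∉ U k := fun k => Nat.sInf_mem (hex (U k))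
  have hyU : ∀ k, y k ∉ U k ∧ ¬ Bad (x k) (y k) := fun k => Nat.sInf_mem (hexY (U k) (x k))
  have hxy : ∀ k, x k ≠ y k := fun k h => (hyU k).2 (Or.inl h)
  have hmono : ∀ j k, j ≤ k → U j ⊆ U k := by
    intro j k hjk
    induction k with
    | zero => simp [Nat.le_zero.mp hjk]
    | succ k ih =>
      rcases Nat.lt_or_ge j (k+1) with h | h
      · intro z hz
        rw [hUsucc k]
        exact Finset.mem_insert_of_mem (Finset.mem_insert_of_mem (ih (Nat.lt_succ_iff.mp h) hz))
      · have : j = k + 1 := le_antisymm hjk h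
        subst this; exact Finset.Subset.refl _
  have hxmemU : ∀ k, x k ∈ U (k+1) := by
    intro k; rw [hUsucc k]; exact Finset.mem_insert_self _ _
  have hymemU : ∀ k, y k ∈ U (k+1) := by
    intro k; rw [hUsucc k]; exact Finset.mem_insert_of_mem (Finset.mem_insert_self _ _)
  -- distinctness across indices
  have huniq_x : ∀ j k, x j = x k → j = k := by
    intro j k h
    rcases lt_trichotomy j k with hlt | he | hlt
    · exact absurd (hmono (j+1) k hlt (hxmemU j)) (h ▸ hxU k)
    · exact he
    · exact absurd (hmono (k+1) j hlt (hxmemU k)) (h ▸ (hxU j)).elim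
  have huniq_y : ∀ j k, y j = y k → j = k := by
    intro j k h
    rcases lt_trichotomy j k with hlt | he | hlt
    · exact absurd (hmono (j+1) k hlt (hymemU j)) (h ▸ (hyU k).1)
    · exact he
    · exact absurd (hmono (k+1) j hlt (hymemU k)) (h ▸ (hyU j).1).elim
  have hxny : ∀ j k, x j ≠ y k := by
    intro j k h
    rcases lt_trichotomy j k with hlt | he | hlt
    · exact (h ▸ (hyU k).1) (hmono (j+1) k hlt (hxmemU j))
    · exact hxy j (he ▸ h)
    · exact (h ▸ hxU j) (hmono (k+1) j hlt (hymemU k))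
  -- coverage
  have hbelow : ∀ k n, n < x k → n ∈ U k := by
    intro k n hn
    by_contra hmem
    exact absurd (Nat.sInf_le (by exact hmem : n ∈ {n | n ∉ U k})) (not_le.mpr hn)
  have hxsm : StrictMono x := by
    have hstep : ∀ k, x k < x (k+1) := by
      intro k
      by_contra hle
      push_neg at hle
      rcases lt_or_eq_of_le hle with h | h
      · exact (hxU (k+1)) (hmono (k+1) (k+1) le_rfl (by
          have := hbelow k _ h
          exact hmono k (k+1) (Nat.le_succ k) this))
      · exact (hxU (k+1)) (h ▸ hxmemU k)
    exact strictMono_nat_of_lt_succ hstep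
  have hcov : ∀ n, ∃ j, n = x j ∨ n = y j := by
    intro n
    have h1 : n < x (n+1) := lt_of_le_of_lt (hxsm.le_apply) (hxsm (Nat.lt_succ_self n))
    have h2 : n ∈ U (n+1) := hbelow (n+1) n h1
    clear h1
    -- induct on the recursion depth
    have : ∀ k n, n ∈ U k → ∃ j, n = x j ∨ n = y j := by
      intro k
      induction k with
      | zero => intro n h; exact absurd h (Finset.notMem_empty n)
      | succ k ih =>
        intro n h
        rw [hUsucc k] at h
        rcases Finset.mem_insert.mp h with h | h
        · exact ⟨k, Or.inl h⟩
        · rcases Finset.mem_insert.mp h with h | h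
          · exact ⟨k, Or.inr h⟩
          · exact ih n h
    exact this (n+1) n h2
  -- the partner involution
  classical
  set g : ℕ → ℕ := fun n =>
    if h : ∃ j, x j = n then y h.choose
    else if h' : ∃ j, y j = n then x h'.choose else n with hg
  have hgx : ∀ j, g (x j) = y j := by
    intro j
    have h : ∃ i, x i = x j := ⟨j, rfl⟩
    rw [hg]; simp only [dif_pos h]
    rw [huniq_x h.choose j h.choose_spec]
  have hgy : ∀ j, g (y j) = x j := by
    intro j
    have h : ¬ ∃ i, x i = y j := by rintro ⟨i, hi⟩; exact hxny i j hi
    have h' : ∃ i, y i = y j := ⟨j, rfl⟩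
    rw [hg]; simp only [dif_neg h, dif_pos h']
    rw [huniq_y h'.choose j h'.choose_spec]
  have hinv : Function.Involutive g := by
    intro n
    obtain ⟨j, hj | hj⟩ := hcov n
    · rw [hj, hgx, hgy]
    · rw [hj, hgy, hgx]
  refine ⟨hinv.toPerm, ?_⟩
  intro n hn
  obtain ⟨j, hj | hj⟩ := hcov n
  · subst hj
    have : Function.Involutive.toPerm g hinv (x j) = y j := hgx j
    rw [this]
    intro hcon
    exact (hyU j).2 (Or.inr (Or.inl ⟨hn, hcon.symm⟩))
  · subst hj
    have : Function.Involutive.toPerm g hinv (y j) = x j := hgy j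
    rw [this]
    intro hcon
    exact (hyU j).2 (Or.inr (Or.inr ⟨hn, hcon.symm⟩))


/-- The matching permutation of `ℤ`: maps `c n` to `d n` exactly for `n ∈ E`. -/
lemma exists_match (c d : ℕ → ℤ) (hc : Function.Injective c) (hd : Function.Injective d)
    (hc0 : ∀ n, c n ≠ 0) (hd0 : ∀ n, d n ≠ 0) (E : Set ℕ) (hEc : (Eᶜ : Set ℕ).Infinite) :
    ∃ π : ℤ ≃ ℤ, π 0 = 0 ∧ (∀ n ∈ E, π (c n) = d n) ∧ ∀ n, n ∉ E → π (c n) ≠ d n := by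
  classical
  set D : Set ℤ := {0} ∪ c '' E with hD
  set R : Set ℤ := {0} ∪ d '' E with hR
  have hcE : ∀ {n}, n ∉ E → c n ∉ D := by
    intro n hn hmem
    rcases hmem with h0 | ⟨m, hm, hcm⟩
    · exact hc0 n h0
    · exact hn (hc hcm ▸ hm)
  have hdE : ∀ {n}, n ∉ E → d n ∉ R := by
    intro n hn hmem
    rcases hmem with h0 | ⟨m, hm, hdm⟩
    · exact hd0 n h0
    · exact hn (hd hdm ▸ hm)
  have hDc : Dᶜ.Infinite := by
    have h1 : (c '' Eᶜ).Infinite := hEc.image (fun a _ b _ h => hc h)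
    refine (h1.diff (Set.finite_singleton 0)).mono ?_
    rintro z ⟨⟨n, hn, rfl⟩, hz0⟩
    exact hcE hn
  have hRc : Rᶜ.Infinite := by
    have h1 : (d '' Eᶜ).Infinite := hEc.image (fun a _ b _ h => hd h)
    refine (h1.diff (Set.finite_singleton 0)).mono ?_
    rintro z ⟨⟨n, hn, rfl⟩, hz0⟩
    exact hdE hn
  have : Nonempty (Denumerable ↥Dᶜ) := nonempty_denumerable_iff.2 ⟨inferInstance, hDc.to_subtype⟩
  obtain ⟨instD⟩ := this
  have : Nonempty (Denumerable ↥Rᶜ) := nonempty_denumerable_iff.2 ⟨inferInstance, hRc.to_subtype⟩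
  obtain ⟨instR⟩ := this
  set eD : ℕ ≃ ↥Dᶜ := (@Denumerable.eqv ↥Dᶜ instD).symm with heD
  set eR : ℕ ≃ ↥Rᶜ := (@Denumerable.eqv ↥Rᶜ instR).symm with heR
  set SS : Set ℕ := {k | ∃ n, n ∉ E ∧ (eD k : ℤ) = c n} with hSS
  set FF : ℕ → ℕ := fun k =>
    if h : ∃ n, n ∉ E ∧ (eD k : ℤ) = c n then eR.symm ⟨d h.choose, hdE h.choose_spec.1⟩ else 0
    with hFF
  have hFFinj : Set.InjOn FF SS := by
    intro k hk k' hk' hEq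
    have Hk : ∃ n, n ∉ E ∧ (eD k : ℤ) = c n := hk
    have Hk' : ∃ n, n ∉ E ∧ (eD k' : ℤ) = c n := hk'
    rw [hFF] at hEq
    simp only [dif_pos Hk, dif_pos Hk'] at hEq
    have h1 := Hk.choose_spec
    have h2 := Hk'.choose_spec
    have : d Hk.choose = d Hk'.choose := by
      have := eR.symm.injective hEq
      exact congrArg Subtype.val this
    have hnn : Hk.choose = Hk'.choose := hd this
    have : (eD k : ℤ) = (eD k' : ℤ) := by rw [h1.2, h2.2, hnn]
    exact eD.injective (Subtype.ext this)
  obtain ⟨s, hs⟩ := exists_perm_avoid SS FF hFFinj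
  set q : ↥Dᶜ ≃ ↥Rᶜ := eD.symm.trans (s.trans eR) with hq
  -- forward map
  set p : ℤ → ℤ := fun z =>
    if hz : z ∈ D then (if h : ∃ n, n ∈ E ∧ c n = z then d h.choose else 0)
    else (q ⟨z, hz⟩ : ℤ) with hp
  set pinv : ℤ → ℤ := fun z =>
    if hz : z ∈ R then (if h : ∃ n, n ∈ E ∧ d n = z then c h.choose else 0)
    else (q.symm ⟨z, hz⟩ : ℤ) with hpinv
  have hp0 : p 0 = 0 := by
    rw [hp]
    have h0 : (0:ℤ) ∈ D := Or.inl rfl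
    simp only [dif_pos h0]
    have : ¬ ∃ n, n ∈ E ∧ c n = 0 := by rintro ⟨n, _, h⟩; exact hc0 n h
    simp only [dif_neg this]
  have hpinv0 : pinv 0 = 0 := by
    rw [hpinv]
    have h0 : (0:ℤ) ∈ R := Or.inl rfl
    simp only [dif_pos h0]
    have : ¬ ∃ n, n ∈ E ∧ d n = 0 := by rintro ⟨n, _, h⟩; exact hd0 n h
    simp only [dif_neg this]
  have hpc : ∀ n ∈ E, p (c n) = d n := by
    intro n hn
    rw [hp]
    have hmem : c n ∈ D := Or.inr ⟨n, hn, rfl⟩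
    have h : ∃ m, m ∈ E ∧ c m = c n := ⟨n, hn, rfl⟩
    simp only [dif_pos hmem, dif_pos h]
    rw [hc h.choose_spec.2]
  have hpinvd : ∀ n ∈ E, pinv (d n) = c n := by
    intro n hn
    rw [hpinv]
    have hmem : d n ∈ R := Or.inr ⟨n, hn, rfl⟩
    have h : ∃ m, m ∈ E ∧ d m = d n := ⟨n, hn, rfl⟩
    simp only [dif_pos hmem, dif_pos h]
    rw [hd h.choose_spec.2]
  have hpD : ∀ z (hz : z ∉ D), p z = (q ⟨z, hz⟩ : ℤ) := by
    intro z hz; rw [hp]; simp only [dif_neg hz]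
  have hpinvR : ∀ z (hz : z ∉ R), pinv z = (q.symm ⟨z, hz⟩ : ℤ) := by
    intro z hz; rw [hpinv]; simp only [dif_neg hz]
  have hleft : Function.LeftInverse pinv p := by
    intro z
    by_cases hz : z ∈ D
    · rcases hz with h0 | ⟨n, hn, rfl⟩
      · rw [Set.mem_singleton_iff.mp h0, hp0, hpinv0]
      · rw [hpc n hn, hpinvd n hn]
    · rw [hpD z hz]
      have hmem := (q ⟨z, hz⟩).2
      rw [hpinvR _ hmem]
      have : (⟨(q ⟨z, hz⟩ : ℤ), hmem⟩ : ↥Rᶜ) = q ⟨z, hz⟩ := rfl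
      rw [this, q.symm_apply_apply]
  have hright : Function.RightInverse pinv p := by
    intro z
    by_cases hz : z ∈ R
    · rcases hz with h0 | ⟨n, hn, rfl⟩
      · rw [Set.mem_singleton_iff.mp h0, hpinv0, hp0]
      · rw [hpinvd n hn, hpc n hn]
    · rw [hpinvR z hz]
      have hmem := (q.symm ⟨z, hz⟩).2
      rw [hpD _ hmem]
      have : (⟨(q.symm ⟨z, hz⟩ : ℤ), hmem⟩ : ↥Dᶜ) = q.symm ⟨z, hz⟩ := rfl
      rw [this, q.apply_symm_apply]
  refine ⟨⟨p, pinv, hleft, hright⟩, hp0, hpc, ?_⟩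
  intro n hn hcon
  simp only [Equiv.coe_fn_mk] at hcon
  have hznD : c n ∉ D := hcE hn
  rw [hpD _ hznD] at hcon
  set k : ℕ := eD.symm ⟨c n, hznD⟩ with hk
  have hkSS : k ∈ SS := ⟨n, hn, by rw [hk, eD.apply_symm_apply]⟩
  have hFFk : FF k = eR.symm ⟨d n, hdE hn⟩ := by
    rw [hFF]
    have h : ∃ m, m ∉ E ∧ (eD k : ℤ) = c m := hkSS
    simp only [dif_pos h]
    have : h.choose = n := by
      have h1 := h.choose_spec
      have : (eD k : ℤ) = c n := by rw [hk, eD.apply_symm_apply]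
      exact hc (h1.2.symm.trans this)
    congr 1
    simp [this]
  have : q ⟨c n, hznD⟩ = eR (s k) := by rw [hq]; rfl
  rw [this] at hcon
  have : s k = eR.symm ⟨d n, hdE hn⟩ := by
    apply eR.injective
    rw [eR.apply_symm_apply]
    exact Subtype.ext hcon
  exact hs k hkSS (this.trans hFFk.symm)


def Pblk (n : ℕ) : Prop := ∃ k : ℕ, 4^k ≤ n ∧ n < 2*4^k

instance Pblk.dec : DecidablePred Pblk := fun n =>
  decidable_of_iff (∃ k ∈ Finset.range (n+1), 4^k ≤ n ∧ n < 2*4^k)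
    ⟨fun ⟨k, _, h⟩ => ⟨k, h⟩, fun ⟨k, h⟩ => ⟨k, Finset.mem_range.mpr
      (Nat.lt_succ_of_lt (lt_of_lt_of_le (show k < 4^k from Nat.lt_pow_self (by norm_num)) h.1)), h⟩⟩

lemma Pblk_pow (k : ℕ) : Pblk (4^k) := ⟨k, le_rfl, by have := pow_pos (show 0 < 4 by norm_num) k; omega⟩

lemma Pblk_not_two_pow (k : ℕ) : ¬ Pblk (2 * 4^k) := by
  rintro ⟨j, h1, h2⟩
  rcases le_or_gt j k with h | h
  · have : (4:ℕ)^j ≤ 4^k := Nat.pow_le_pow_right (by norm_num) h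
    omega
  · have : (4:ℕ)^(k+1) ≤ 4^j := Nat.pow_le_pow_right (by norm_num) h
    have h4 : (4:ℕ)^(k+1) = 4 * 4^k := by ring
    omega

lemma Pblk_infinite : {n | Pblk n}.Infinite := by
  apply Set.infinite_of_injective_forall_mem (f := fun k : ℕ => 4^k)
  · intro i j hij
    exact Nat.pow_right_injective (by norm_num) hij
  · intro k
    exact Pblk_pow k

lemma Pblk_compl_infinite : {n | Pblk n}ᶜ.Infinite := by
  apply Set.infinite_of_injective_forall_mem (f := fun k : ℕ => 2 * 4^k)
  · intro i j hij
    simp only at hij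
    exact Nat.pow_right_injective (by norm_num) (by omega : (4:ℕ)^i = 4^j)
  · intro k
    exact Pblk_not_two_pow k

noncomputable def cnt (N : ℕ) : ℕ := ((Finset.Icc 1 N).filter Pblk).card

lemma geom4 (K : ℕ) : 3 * (∑ k ∈ Finset.range K, 4^k) + 1 = 4^K := by
  induction K with
  | zero => simp
  | succ K ih =>
    rw [Finset.sum_range_succ, pow_succ]
    omega

lemma cnt_upper (K : ℕ) : 3 * cnt (4^K) ≤ 4^K + 2 := by
  have hsub : (Finset.Icc 1 (4^K)).filter Pblk ⊆
      insert (4^K) ((Finset.range K).biUnion fun k => Finset.Ico (4^k) (2*4^k)) := by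
    intro n hn
    rw [Finset.mem_filter] at hn
    obtain ⟨hmem, j, hj1, hj2⟩ := hn
    rw [Finset.mem_Icc] at hmem
    rcases lt_or_ge j K with h | h
    · exact Finset.mem_insert_of_mem (Finset.mem_biUnion.mpr
        ⟨j, Finset.mem_range.mpr h, Finset.mem_Ico.mpr ⟨hj1, hj2⟩⟩)
    · have : (4:ℕ)^K ≤ 4^j := Nat.pow_le_pow_right (by norm_num) h
      have : n = 4^K := by omega
      exact this ▸ Finset.mem_insert_self _ _
  have hcard : cnt (4^K) ≤ (∑ k ∈ Finset.range K, 4^k) + 1 := by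
    calc cnt (4^K) ≤ (insert (4^K) ((Finset.range K).biUnion fun k =>
            Finset.Ico (4^k) (2*4^k))).card := Finset.card_le_card hsub
      _ ≤ ((Finset.range K).biUnion fun k => Finset.Ico (4^k) (2*4^k)).card + 1 :=
          Finset.card_insert_le _ _
      _ ≤ (∑ k ∈ Finset.range K, (Finset.Ico (4^k) (2*4^k)).card) + 1 := by
          exact Nat.add_le_add_right (Finset.card_biUnion_le) 1
      _ = (∑ k ∈ Finset.range K, 4^k) + 1 := by
          congr 1
          refine Finset.sum_congr rfl fun k _ => ?_
          rw [Nat.card_Ico]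
          omega
  have := geom4 K
  omega

lemma cnt_lower (K : ℕ) (hK : 1 ≤ K) : cnt (4^K) + 4^K ≤ cnt (2*4^K) + 1 := by
  have hL : (4:ℕ)^1 ≤ 4^K := Nat.pow_le_pow_right (by norm_num) hK
  have hL4 : (4:ℕ) ≤ 4^K := by simpa using hL
  set L := (4:ℕ)^K with hLdef
  have hdisj : Disjoint ((Finset.Icc 1 L).filter Pblk) (Finset.Icc (L+1) (2*L-1)) := by
    rw [Finset.disjoint_left]
    intro n hn hn2
    rw [Finset.mem_filter, Finset.mem_Icc] at hn
    rw [Finset.mem_Icc] at hn2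
    omega
  have hsub : ((Finset.Icc 1 L).filter Pblk) ∪ Finset.Icc (L+1) (2*L-1) ⊆
      (Finset.Icc 1 (2*L)).filter Pblk := by
    intro n hn
    rw [Finset.mem_union] at hn
    rw [Finset.mem_filter, Finset.mem_Icc]
    rcases hn with hn | hn
    · rw [Finset.mem_filter, Finset.mem_Icc] at hn
      exact ⟨⟨hn.1.1, by omega⟩, hn.2⟩
    · rw [Finset.mem_Icc] at hn
      refine ⟨⟨by omega, by omega⟩, ⟨K, by omega, by omega⟩⟩
  have hcard := Finset.card_le_card hsub
  rw [Finset.card_union_of_disjoint hdisj, Nat.card_Icc] at hcard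
  have : 2*L - 1 + 1 - (L+1) = L - 1 := by omega
  rw [this] at hcard
  show cnt L + L ≤ cnt (2*L) + 1
  rw [cnt, cnt]
  omega

lemma no_limit : ¬ ∃ l : ℝ, Tendsto (fun N : ℕ => (N:ℝ)⁻¹ * (-(4⁻¹:ℝ) * (cnt N : ℝ)))
    atTop (nhds l) := by
  rintro ⟨l, hl⟩
  have hm1 : StrictMono (fun K : ℕ => (4:ℕ)^K) := fun i j h =>
    Nat.pow_lt_pow_right (by norm_num) h
  have hm2 : StrictMono (fun K : ℕ => 2 * (4:ℕ)^K) := fun i j h => by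
    have := hm1 h; simp only at *; omega
  have h1 := hl.comp hm1.tendsto_atTop
  have h2 := hl.comp hm2.tendsto_atTop
  have hdiff : Tendsto (fun K : ℕ =>
      ((2 * 4^K : ℕ):ℝ)⁻¹ * (-(4⁻¹:ℝ) * (cnt (2*4^K) : ℝ)) -
      ((4^K : ℕ):ℝ)⁻¹ * (-(4⁻¹:ℝ) * (cnt (4^K) : ℝ))) atTop (nhds 0) := by
    have := h2.sub h1
    simpa using this
  have hev : ∀ᶠ K : ℕ in atTop,
      ((2 * 4^K : ℕ):ℝ)⁻¹ * (-(4⁻¹:ℝ) * (cnt (2*4^K) : ℝ)) -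
      ((4^K : ℕ):ℝ)⁻¹ * (-(4⁻¹:ℝ) * (cnt (4^K) : ℝ)) ≤ -(1/24) := by
    filter_upwards [eventually_ge_atTop 2] with K hK
    set c1 : ℝ := (cnt (4^K) : ℝ) with hc1
    set c2 : ℝ := (cnt (2*4^K) : ℝ) with hc2
    set x : ℝ := ((4^K : ℕ) : ℝ) with hx
    have hub : 3 * c1 ≤ x + 2 := by
      have := cnt_upper K
      rw [hc1, hx]
      exact_mod_cast this
    have hlb : c1 + x ≤ c2 + 1 := by
      have := cnt_lower K (by omega)
      rw [hc1, hc2, hx]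
      exact_mod_cast this
    have hx16 : (16:ℝ) ≤ x := by
      rw [hx]
      have : (4:ℕ)^2 ≤ 4^K := Nat.pow_le_pow_right (by norm_num) hK
      exact_mod_cast this
    have hxpos : (0:ℝ) < x := by linarith
    have hcast : ((2 * 4^K : ℕ) : ℝ) = 2 * x := by
      rw [hx]; push_cast; ring
    rw [hcast]
    have hu : (0:ℝ) < x⁻¹ := inv_pos.mpr hxpos
    have hxu : x * x⁻¹ = 1 := mul_inv_cancel₀ (ne_of_gt hxpos)
    have key : 6*c1 - 3*c2 ≤ -x := by linarith
    have h5 : x⁻¹ * (6*c1 - 3*c2) ≤ x⁻¹ * (-x) := mul_le_mul_of_nonneg_left key hu.le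
    have h6 : x⁻¹ * (-x) = -1 := by
      rw [mul_neg, mul_comm, hxu]
    rw [mul_inv]
    nlinarith [h5, h6]
  have := le_of_tendsto hdiff hev
  linarith



instance ZMod2Top : TopologicalSpace (ZMod 2) := ⊥
instance ZMod2Disc : DiscreteTopology (ZMod 2) := ⟨rfl⟩
instance : IsTopologicalAddGroup (ZMod 2) :=
  { continuous_add := continuous_of_discreteTopology
    continuous_neg := continuous_of_discreteTopology }
instance : BorelSpace (ZMod 2) := by
  constructor
  rw [borel_eq_top_of_discrete]
  apply le_antisymm le_top
  intro s _
  exact s.to_countable.measurableSet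

abbrev Om : Type := ℤ → ZMod 2

/-- cylinder sets -/
def cyl (s : Finset ℤ) (f : ℤ → ZMod 2) : Set Om := {x | ∀ i ∈ s, x i = f i}

lemma cyl_measurable (s : Finset ℤ) (f : ℤ → ZMod 2) : MeasurableSet (cyl s f) := by
  have : cyl s f = ⋂ i ∈ s, (fun x : Om => x i) ⁻¹' {f i} := by
    ext x; simp [cyl]
  rw [this]
  exact MeasurableSet.biInter s.countable_toSet
    (fun i _ => (measurable_pi_apply i) (measurableSet_singleton (f i)))

lemma isPiSystem_cyl : IsPiSystem {S : Set Om | ∃ s f, S = cyl s f} := by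
  rintro S1 ⟨s, f, rfl⟩ S2 ⟨t, g, rfl⟩ hne
  obtain ⟨x₀, hx₀⟩ := hne
  refine ⟨s ∪ t, x₀, ?_⟩
  ext x
  simp only [Set.mem_inter_iff, cyl, Set.mem_setOf_eq, Finset.mem_union]
  constructor
  · rintro ⟨h1, h2⟩ i hi
    rcases hi with hi | hi
    · rw [h1 i hi, ← hx₀.1 i hi]
    · rw [h2 i hi, ← hx₀.2 i hi]
  · intro h
    exact ⟨fun i hi => (h i (Or.inl hi)).trans (hx₀.1 i hi),
           fun i hi => (h i (Or.inr hi)).trans (hx₀.2 i hi)⟩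

lemma generateFrom_cyl :
    (inferInstance : MeasurableSpace Om) = MeasurableSpace.generateFrom {S | ∃ s f, S = cyl s f} := by
  apply le_antisymm
  · rw [show (inferInstance : MeasurableSpace Om) = MeasurableSpace.pi from rfl]
    refine iSup_le fun i => le_trans (MeasurableSpace.comap_mono le_top) ?_
    have : (⊤ : MeasurableSpace (ZMod 2)) =
        MeasurableSpace.generateFrom {t | ∃ v, t = ({v} : Set (ZMod 2))} := by
      apply le_antisymm
      · intro s _
        have : s = ⋃ v ∈ s, ({v} : Set (ZMod 2)) := by simp
        rw [this]
        exact MeasurableSet.biUnion s.to_countable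
          (fun v _ => MeasurableSpace.measurableSet_generateFrom ⟨v, rfl⟩)
      · exact le_top
    rw [this, MeasurableSpace.comap_generateFrom]
    apply MeasurableSpace.generateFrom_le
    rintro S ⟨t, ⟨v, rfl⟩, rfl⟩
    apply MeasurableSpace.measurableSet_generateFrom
    refine ⟨{i}, fun _ => v, ?_⟩
    ext x; simp [cyl]
  · apply MeasurableSpace.generateFrom_le
    rintro S ⟨s, f, rfl⟩
    exact cyl_measurable s f

noncomputable def K0 : TopologicalSpace.PositiveCompacts Om :=
  ⟨⟨Set.univ, isCompact_univ⟩, by simp⟩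

noncomputable def nu : Measure Om := Measure.addHaarMeasure K0

instance : IsProbabilityMeasure nu := by
  constructor
  have := Measure.addHaarMeasure_self (K₀ := K0)
  show Measure.addHaarMeasure K0 Set.univ = 1
  exact this

instance : nu.IsAddLeftInvariant := Measure.isAddLeftInvariant_addHaarMeasure K0

/-- translation moves cylinders -/
lemma nu_cyl_translate (t : Finset ℤ) (f v : ℤ → ZMod 2) :
    nu (cyl t (f - v)) = nu (cyl t f) := by
  have h := measure_preimage_add nu v (cyl t f)
  have : (fun x : Om => v + x) ⁻¹' (cyl t f) = cyl t (f - v) := by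
    ext x
    simp only [Set.mem_preimage, cyl, Set.mem_setOf_eq, Pi.add_apply, Pi.sub_apply]
    constructor
    · intro h i hi
      rw [eq_sub_iff_add_eq, add_comm]
      exact h i hi
    · intro h i hi
      rw [h i hi]
      abel
  rw [← this]
  exact h


lemma zmod2_cases : ∀ v : ZMod 2, v = 0 ∨ v = 1 := by decide

lemma nu_cyl (s : Finset ℤ) (f : ℤ → ZMod 2) :
    nu (cyl s f) = (2 : ENNReal)⁻¹ ^ s.card := by
  induction s using Finset.induction generalizing f with
  | empty =>
    simp only [Finset.card_empty, pow_zero]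
    have : cyl ∅ f = Set.univ := by ext x; simp [cyl]
    rw [this]
    exact measure_univ
  | @insert j s hj ih =>
    -- split the cylinder over s according to the value at j
    have hsplit : cyl s f = cyl (insert j s) (Function.update f j 0) ∪
        cyl (insert j s) (Function.update f j 1) := by
      ext x
      simp only [cyl, Set.mem_union, Set.mem_setOf_eq]
      constructor
      · intro h
        rcases zmod2_cases (x j) with hv | hv
        · left
          intro i hi
          rcases Finset.mem_insert.mp hi with rfl | hi
          · rw [Function.update_self, hv]
          · rw [Function.update_of_ne (by intro hh; exact hj (hh ▸ hi)), h i hi]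
        · right
          intro i hi
          rcases Finset.mem_insert.mp hi with rfl | hi
          · rw [Function.update_self, hv]
          · rw [Function.update_of_ne (by intro hh; exact hj (hh ▸ hi)), h i hi]
      · intro h i hi
        rcases h with h | h
        · rw [h i (Finset.mem_insert_of_mem hi),
            Function.update_of_ne (by intro hh; exact hj (hh ▸ hi))]
        · rw [h i (Finset.mem_insert_of_mem hi),
            Function.update_of_ne (by intro hh; exact hj (hh ▸ hi))]
    have hdisj : Disjoint (cyl (insert j s) (Function.update f j 0))
        (cyl (insert j s) (Function.update f j 1)) := by
      rw [Set.disjoint_left]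
      intro x h0 h1
      have e0 := h0 j (Finset.mem_insert_self j s)
      have e1 := h1 j (Finset.mem_insert_self j s)
      rw [Function.update_self] at e0 e1
      rw [e0] at e1
      exact absurd e1 (by decide)
    -- the two halves have equal measure, via translation by the delta at j
    have htrans : nu (cyl (insert j s) (Function.update f j 0)) =
        nu (cyl (insert j s) (Function.update f j 1)) := by
      have := nu_cyl_translate (insert j s) (Function.update f j 1)
        (fun i => if i = j then 1 else 0)
      have heq : Function.update f j 1 - (fun i => if i = j then (1 : ZMod 2) else 0) =
          Function.update f j 0 := by
        funext i
        by_cases hij : i = j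
        · subst hij; simp [Function.update_self]
        · simp [Function.update_of_ne hij, hij]
      rw [heq] at this
      rw [this]
    -- combine
    have hm0 := cyl_measurable (insert j s) (Function.update f j 0)
    have hm1 := cyl_measurable (insert j s) (Function.update f j 1)
    have hsum : nu (cyl s f) = nu (cyl (insert j s) (Function.update f j 0)) +
        nu (cyl (insert j s) (Function.update f j 1)) := by
      rw [hsplit]
      exact measure_union hdisj hm1
    -- value for arbitrary g on insert j s: first note cyl (insert j s) f only depends on values on the set
    have hval : nu (cyl (insert j s) (Function.update f j 0)) = (2:ENNReal)⁻¹ ^ (insert j s).card := by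
      have h2 : nu (cyl s f) = 2 * nu (cyl (insert j s) (Function.update f j 0)) := by
        rw [hsum, ← htrans, two_mul]
      rw [Finset.card_insert_of_notMem hj, pow_succ]
      rw [ih f] at h2
      have h2ne : (2 : ENNReal) ≠ 0 := by norm_num
      have h2top : (2 : ENNReal) ≠ ⊤ := by norm_num
      calc nu (cyl (insert j s) (Function.update f j 0))
          = 2⁻¹ * (2 * nu (cyl (insert j s) (Function.update f j 0))) := by
            rw [← mul_assoc, ENNReal.inv_mul_cancel h2ne h2top, one_mul]
        _ = 2⁻¹ * 2⁻¹ ^ s.card := by rw [← h2]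
        _ = 2⁻¹ ^ s.card * 2⁻¹ := by rw [mul_comm]
    -- now for the original f (which may have any value at j)
    have hff : ∀ g : ℤ → ZMod 2, (∀ i ∈ insert j s, g i = f i) →
        cyl (insert j s) g = cyl (insert j s) f := by
      intro g hg
      ext x
      simp only [cyl, Set.mem_setOf_eq]
      constructor
      · intro h i hi; rw [← hg i hi, h i hi]
      · intro h i hi; rw [hg i hi, h i hi]
    rcases zmod2_cases (f j) with hv | hv
    · rw [← hff (Function.update f j 0) ?_]
      · exact hval
      · intro i hi
        by_cases hij : i = j
        · subst hij; rw [Function.update_self, hv]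
        · rw [Function.update_of_ne hij]
    · rw [← hff (Function.update f j 1) ?_]
      · rw [← htrans]; exact hval
      · intro i hi
        by_cases hij : i = j
        · subst hij; rw [Function.update_self, hv]
        · rw [Function.update_of_ne hij]

/-- any probability measure agreeing with `nu` on cylinders equals `nu` -/
lemma eq_nu_of_cyl (m : Measure Om) [IsProbabilityMeasure m]
    (h : ∀ s f, m (cyl s f) = (2 : ENNReal)⁻¹ ^ s.card) : m = nu := by
  refine ext_of_generate_finite _ generateFrom_cyl isPiSystem_cyl ?_ ?_
  · rintro S ⟨s, f, rfl⟩
    rw [h s f, nu_cyl]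
  · simp

/-- reindexing + affine twist -/
def theta (rho : ℤ ≃ ℤ) (w : ℤ → ZMod 2) : Equiv.Perm Om :=
  (Equiv.arrowCongr rho.symm (Equiv.refl (ZMod 2))).trans (Equiv.addLeft w)

lemma theta_apply (rho : ℤ ≃ ℤ) (w : ℤ → ZMod 2) (x : Om) (i : ℤ) :
    theta rho w x i = w i + x (rho i) := rfl

lemma theta_symm_apply (rho : ℤ ≃ ℤ) (w : ℤ → ZMod 2) (x : Om) (j : ℤ) :
    (theta rho w).symm x j = x (rho.symm j) - w (rho.symm j) := by
  have : (theta rho w).symm x = (Equiv.arrowCongr rho.symm (Equiv.refl (ZMod 2))).symm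
      ((Equiv.addLeft w).symm x) := rfl
  rw [this]
  simp [Equiv.arrowCongr, Equiv.addLeft, sub_eq_neg_add]

lemma theta_measurable (rho : ℤ ≃ ℤ) (w : ℤ → ZMod 2) : Measurable (theta rho w) := by
  apply measurable_pi_lambda
  intro i
  have : (fun x : Om => theta rho w x i) = (fun v : ZMod 2 => w i + v) ∘ (fun x : Om => x (rho i)) := rfl
  rw [this]
  exact (measurable_of_countable _).comp (measurable_pi_apply (rho i))

lemma theta_mp (rho : ℤ ≃ ℤ) (w : ℤ → ZMod 2) :
    MeasurePreserving (theta rho w) nu nu := by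
  refine ⟨theta_measurable rho w, ?_⟩
  have : IsProbabilityMeasure (nu.map (theta rho w)) :=
    Measure.isProbabilityMeasure_map (theta_measurable rho w).aemeasurable
  apply eq_nu_of_cyl
  intro s f
  rw [Measure.map_apply (theta_measurable rho w) (cyl_measurable s f)]
  have hpre : (theta rho w) ⁻¹' (cyl s f) =
      cyl (s.image rho) (fun j => f (rho.symm j) - w (rho.symm j)) := by
    ext x
    simp only [Set.mem_preimage, cyl, Set.mem_setOf_eq, Finset.mem_image, theta_apply]
    constructor
    · rintro h j ⟨i, hi, rfl⟩
      rw [rho.symm_apply_apply]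
      rw [eq_sub_iff_add_eq, add_comm]
      exact h i hi
    · intro h i hi
      have := h (rho i) ⟨i, hi, rfl⟩
      rw [rho.symm_apply_apply] at this
      rw [this]
      abel
  rw [hpre, nu_cyl, Finset.card_image_of_injective _ rho.injective]



-- ### dynamics
lemma theta_symm_measurable (rho : ℤ ≃ ℤ) (w : ℤ → ZMod 2) :
    Measurable ⇑(theta rho w).symm := by
  have h : ⇑(theta rho w).symm = ⇑(theta rho.symm (fun j => -w (rho.symm j))) := by
    funext x j
    rw [theta_symm_apply, theta_apply, sub_eq_neg_add]
  rw [h]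
  exact theta_measurable _ _

lemma theta_symm_mp (rho : ℤ ≃ ℤ) (w : ℤ → ZMod 2) :
    MeasurePreserving ⇑(theta rho w).symm nu nu := by
  have h : ⇑(theta rho w).symm = ⇑(theta rho.symm (fun j => -w (rho.symm j))) := by
    funext x j
    rw [theta_symm_apply, theta_apply, sub_eq_neg_add]
  rw [h]
  exact theta_mp _ _

/-- the shift -/
noncomputable def sh : Equiv.Perm Om := theta (Equiv.addRight (1:ℤ)) 0

lemma sh_apply (x : Om) (i : ℤ) : sh x i = x (i + 1) := by
  rw [sh, theta_apply]
  simp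

lemma sh_symm_apply (x : Om) (i : ℤ) : sh.symm x i = x (i - 1) := by
  rw [sh, theta_symm_apply]
  simp [sub_eq_add_neg]

abbrev XX : Type := Om × Om

noncomputable def sig : Equiv.Perm XX := Equiv.prodCongr sh sh

lemma sig_zpow (m : ℤ) : ∀ z : XX,
    (sig ^ m) z = ((fun i => z.1 (i + m)), (fun i => z.2 (i + m))) := by
  induction m using Int.induction_on with
  | zero => intro z; simp
  | succ k ih =>
    intro z
    have hstep : (sig ^ ((k : ℤ) + 1)) z = (sig ^ (k:ℤ)) (sig z) := by
      rw [zpow_add_one, Equiv.Perm.mul_apply]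
    rw [hstep, ih]
    have h1 : (sig z).1 = fun i => z.1 (i + 1) := by funext i; exact sh_apply z.1 i
    have h2 : (sig z).2 = fun i => z.2 (i + 1) := by funext i; exact sh_apply z.2 i
    rw [h1, h2]
    refine Prod.ext ?_ ?_ <;> · funext i; simp; ring_nf
  | pred k ih =>
    intro z
    have hstep : (sig ^ ((-k : ℤ) - 1)) z = (sig ^ (-k:ℤ)) (sig⁻¹ z) := by
      rw [zpow_sub_one, Equiv.Perm.mul_apply]
    rw [hstep, ih]
    have h1 : (sig⁻¹ z).1 = fun i => z.1 (i - 1) := by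
      funext i
      have : sig⁻¹ z = (sh.symm z.1, sh.symm z.2) := rfl
      rw [this]
      exact sh_symm_apply z.1 i
    have h2 : (sig⁻¹ z).2 = fun i => z.2 (i - 1) := by
      funext i
      have : sig⁻¹ z = (sh.symm z.1, sh.symm z.2) := rfl
      rw [this]
      exact sh_symm_apply z.2 i
    rw [h1, h2]
    refine Prod.ext ?_ ?_ <;> · funext i; simp; ring_nf


/-- left-layer twisted transformation -/
noncomputable def TT (kk : ℤ ≃ ℤ) (u : ℤ → ZMod 2) : Equiv.Perm XX :=
  (Equiv.prodCongr (theta kk u) (Equiv.refl Om)) * sig * (Equiv.prodCongr (theta kk u) (Equiv.refl Om))⁻¹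

/-- right-layer twisted transformation -/
noncomputable def SS' (pp : ℤ ≃ ℤ) (w : ℤ → ZMod 2) : Equiv.Perm XX :=
  (Equiv.prodCongr (Equiv.refl Om) (theta pp w)) * sig * (Equiv.prodCongr (Equiv.refl Om) (theta pp w))⁻¹

lemma TT_zpow_apply (kk : ℤ ≃ ℤ) (u : ℤ → ZMod 2) (m : ℤ) (z : XX) :
    ((TT kk u) ^ m) z =
      (theta kk u (fun i => ((theta kk u).symm z.1) (i + m)), fun i => z.2 (i + m)) := by
  rw [TT, conj_zpow, Equiv.Perm.mul_apply, Equiv.Perm.mul_apply]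
  have h1 : ((Equiv.prodCongr (theta kk u) (Equiv.refl Om))⁻¹) z
      = ((theta kk u).symm z.1, z.2) := rfl
  rw [h1, sig_zpow]
  rfl

lemma SS'_zpow_apply (pp : ℤ ≃ ℤ) (w : ℤ → ZMod 2) (m : ℤ) (z : XX) :
    ((SS' pp w) ^ m) z =
      (fun i => z.1 (i + m), theta pp w (fun i => ((theta pp w).symm z.2) (i + m))) := by
  rw [SS', conj_zpow, Equiv.Perm.mul_apply, Equiv.Perm.mul_apply]
  have h1 : ((Equiv.prodCongr (Equiv.refl Om) (theta pp w))⁻¹) z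
      = (z.1, (theta pp w).symm z.2) := rfl
  rw [h1, sig_zpow]
  rfl

lemma TT_zpow_snd (kk : ℤ ≃ ℤ) (u : ℤ → ZMod 2) (m : ℤ) (z : XX) (i : ℤ) :
    (((TT kk u) ^ m) z).2 i = z.2 (i + m) := by rw [TT_zpow_apply]

lemma SS'_zpow_fst (pp : ℤ ≃ ℤ) (w : ℤ → ZMod 2) (m : ℤ) (z : XX) (i : ℤ) :
    (((SS' pp w) ^ m) z).1 i = z.1 (i + m) := by rw [SS'_zpow_apply]

lemma TT_zpow_fst_zero (kk : ℤ ≃ ℤ) (u : ℤ → ZMod 2) (hk0 : kk 0 = 0) (m : ℤ) (z : XX) :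
    (((TT kk u) ^ m) z).1 0 = u 0 + (z.1 (kk.symm m) - u (kk.symm m)) := by
  rw [TT_zpow_apply]
  show (theta kk u fun i => ((theta kk u).symm z.1) (i + m)) 0 = _
  rw [theta_apply, hk0, zero_add, theta_symm_apply]

lemma SS'_zpow_snd_zero (pp : ℤ ≃ ℤ) (w : ℤ → ZMod 2) (hp0 : pp 0 = 0) (m : ℤ) (z : XX) :
    (((SS' pp w) ^ m) z).2 0 = w 0 + (z.2 (pp.symm m) - w (pp.symm m)) := by
  rw [SS'_zpow_apply]
  show (theta pp w fun i => ((theta pp w).symm z.2) (i + m)) 0 = _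
  rw [theta_apply, hp0, zero_add, theta_symm_apply]

-- measure-theoretic structure on XX
noncomputable def mu : Measure XX := nu.prod nu

instance : IsProbabilityMeasure mu := by rw [mu]; infer_instance

lemma prodCongr_mp (e f : Equiv.Perm Om) (he : MeasurePreserving ⇑e nu nu)
    (hf : MeasurePreserving ⇑f nu nu) :
    MeasurePreserving ⇑(Equiv.prodCongr e f) mu mu := by
  have : ⇑(Equiv.prodCongr e f) = Prod.map ⇑e ⇑f := by
    funext z; rfl
  rw [this, mu]
  exact he.prod hf

lemma sig_mp : MeasurePreserving ⇑sig mu mu :=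
  prodCongr_mp _ _ (theta_mp _ _) (theta_mp _ _)

lemma TT_mp (kk : ℤ ≃ ℤ) (u : ℤ → ZMod 2) : MeasurePreserving ⇑(TT kk u) mu mu := by
  have h1 : MeasurePreserving ⇑(Equiv.prodCongr (theta kk u) (Equiv.refl Om)) mu mu :=
    prodCongr_mp _ _ (theta_mp _ _) (MeasurePreserving.id nu)
  have h2 : MeasurePreserving ⇑(Equiv.prodCongr (theta kk u) (Equiv.refl Om))⁻¹ mu mu := by
    have : ⇑(Equiv.prodCongr (theta kk u) (Equiv.refl Om))⁻¹
        = Prod.map ⇑(theta kk u).symm ⇑(Equiv.refl Om) := by funext z; rfl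
    rw [this, mu]
    exact (theta_symm_mp _ _).prod (MeasurePreserving.id nu)
  have : ⇑(TT kk u) = ⇑(Equiv.prodCongr (theta kk u) (Equiv.refl Om)) ∘ ⇑sig ∘
      ⇑(Equiv.prodCongr (theta kk u) (Equiv.refl Om))⁻¹ := by
    funext z; rfl
  rw [this]
  exact (h1.comp sig_mp).comp h2

lemma SS'_mp (pp : ℤ ≃ ℤ) (w : ℤ → ZMod 2) : MeasurePreserving ⇑(SS' pp w) mu mu := by
  have h1 : MeasurePreserving ⇑(Equiv.prodCongr (Equiv.refl Om) (theta pp w)) mu mu :=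
    prodCongr_mp _ _ (MeasurePreserving.id nu) (theta_mp _ _)
  have h2 : MeasurePreserving ⇑(Equiv.prodCongr (Equiv.refl Om) (theta pp w))⁻¹ mu mu := by
    have : ⇑(Equiv.prodCongr (Equiv.refl Om) (theta pp w))⁻¹
        = Prod.map ⇑(Equiv.refl Om) ⇑(theta pp w).symm := by funext z; rfl
    rw [this, mu]
    exact (MeasurePreserving.id nu).prod (theta_symm_mp _ _)
  have : ⇑(SS' pp w) = ⇑(Equiv.prodCongr (Equiv.refl Om) (theta pp w)) ∘ ⇑sig ∘
      ⇑(Equiv.prodCongr (Equiv.refl Om) (theta pp w))⁻¹ := by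
    funext z; rfl
  rw [this]
  exact (h1.comp sig_mp).comp h2



-- ### integrals
noncomputable def rr : ZMod 2 → ℝ := fun v => if v = 1 then 1/2 else -(1/2)

lemma rr_zero : rr 0 = -(1/2) := by rw [rr, if_neg (by decide)]

lemma rr_one : rr 1 = 1/2 := by rw [rr, if_pos rfl]

lemma rr_bound (v : ZMod 2) : |rr v| ≤ 1/2 := by
  rcases zmod2_cases v with h | h <;> subst h
  · rw [rr_zero, abs_neg, abs_of_nonneg (by norm_num)]
  · rw [rr_one, abs_of_nonneg (by norm_num)]

lemma rr_mul_next (v : ZMod 2) : rr v * rr (1 + v) = -(1/4) := by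
  rcases zmod2_cases v with h | h <;> subst h
  · rw [show (1 + 0 : ZMod 2) = 1 from by decide, rr_zero, rr_one]
    norm_num
  · rw [show (1 + 1 : ZMod 2) = 0 from by decide, rr_zero, rr_one]
    norm_num

lemma rr_sum : ∑ v : ZMod 2, rr v = 0 := by
  have huniv : (Finset.univ : Finset (ZMod 2)) = {0, 1} := by decide
  rw [huniv, Finset.sum_insert (by decide), Finset.sum_singleton, rr_zero, rr_one]
  norm_num

lemma rr_sum_shift (t : ZMod 2) : ∑ v : ZMod 2, rr (t + v) = 0 := by
  rw [Fintype.sum_equiv (Equiv.addLeft t) (fun v => rr (t + v)) rr (fun v => rfl)]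
  exact rr_sum

lemma integral_rr_const (i : ℤ) :
    ∫ x, rr (x i) * rr (1 + x i) ∂nu = -(1/4) := by
  have h : (fun x : Om => rr (x i) * rr (1 + x i)) = fun _ => -(1/4 : ℝ) := by
    funext x
    exact rr_mul_next (x i)
  rw [h, integral_const]
  simp

lemma integral_rr_indep (i j : ℤ) (hij : i ≠ j) (t : ZMod 2) :
    ∫ x, rr (x i) * rr (t + x j) ∂nu = 0 := by
  classical
  set C : ZMod 2 × ZMod 2 → Set Om := fun p => {y : Om | y i = p.1 ∧ y j = p.2} with hC
  have hCm : ∀ p, MeasurableSet (C p) := by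
    intro p
    have : C p = cyl {i, j} (fun l => if l = i then p.1 else p.2) := by
      ext x
      simp only [hC, cyl, Set.mem_setOf_eq, Finset.mem_insert, Finset.mem_singleton]
      constructor
      · rintro ⟨h1, h2⟩ l hl
        rcases hl with rfl | rfl
        · simp [h1]
        · simp [if_neg (Ne.symm hij), h2]
      · intro h
        refine ⟨?_, ?_⟩
        · have := h i (Or.inl rfl)
          simpa using this
        · have := h j (Or.inr rfl)
          simpa [if_neg (Ne.symm hij)] using this
    rw [this]
    exact cyl_measurable _ _
  have hCval : ∀ p, nu (C p) = (2 : ENNReal)⁻¹ ^ 2 := by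
    intro p
    have hsame : C p = cyl {i, j} (fun l => if l = i then p.1 else p.2) := by
      ext x
      simp only [hC, cyl, Set.mem_setOf_eq, Finset.mem_insert, Finset.mem_singleton]
      constructor
      · rintro ⟨h1, h2⟩ l hl
        rcases hl with rfl | rfl
        · simp [h1]
        · simp [if_neg (Ne.symm hij), h2]
      · intro h
        refine ⟨?_, ?_⟩
        · have := h i (Or.inl rfl)
          simpa using this
        · have := h j (Or.inr rfl)
          simpa [if_neg (Ne.symm hij)] using this
    rw [hsame, nu_cyl]
    congr 1
    rw [Finset.card_insert_of_notMem (by simpa using hij), Finset.card_singleton]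
  have hdecomp : (fun x : Om => rr (x i) * rr (t + x j)) =
      fun x => ∑ p : ZMod 2 × ZMod 2, Set.indicator (C p) (fun _ => rr p.1 * rr (t + p.2)) x := by
    funext x
    rw [Finset.sum_eq_single (x i, x j)]
    · rw [Set.indicator_of_mem (by exact ⟨rfl, rfl⟩)]
    · intro p _ hp
      rw [Set.indicator_of_notMem]
      intro hmem
      exact hp (Prod.ext hmem.1.symm hmem.2.symm)
    · intro h
      exact absurd (Finset.mem_univ _) h
  rw [hdecomp, integral_finset_sum]
  · have hterm : ∀ p : ZMod 2 × ZMod 2,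
        ∫ x, Set.indicator (C p) (fun _ => rr p.1 * rr (t + p.2)) x ∂nu
          = (rr p.1 * rr (t + p.2)) * (1/4 : ℝ) := by
      intro p
      rw [integral_indicator_const _ (hCm p), measureReal_def, hCval p, smul_eq_mul, mul_comm]
      congr 1
      rw [ENNReal.toReal_pow, ENNReal.toReal_inv]
      norm_num
    rw [Finset.sum_congr rfl (fun p _ => hterm p)]
    rw [← Finset.sum_mul]
    have : ∑ p : ZMod 2 × ZMod 2, rr p.1 * rr (t + p.2) = 0 := by
      rw [Fintype.sum_prod_type]
      have hinner : ∀ v : ZMod 2, ∑ q : ZMod 2, rr v * rr (t + q) = 0 := by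
        intro v
        rw [← Finset.mul_sum, rr_sum_shift t, mul_zero]
      rw [Finset.sum_congr rfl (fun v _ => hinner v), Finset.sum_const, smul_zero]
    rw [this, zero_mul]
  · intro p _
    exact (integrable_const _).indicator (hCm p)

lemma integral_snd (F : Om → ℝ) (hF : Measurable F) :
    ∫ z : XX, F z.2 ∂mu = ∫ x, F x ∂nu := by
  rw [mu]
  have h1 : ∫ z : XX, F z.2 ∂(nu.prod nu) = ∫ x, F x ∂((nu.prod nu).map Prod.snd) := by
    rw [integral_map measurable_snd.aemeasurable hF.aestronglyMeasurable]
  rw [h1, Measure.map_snd_prod]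
  simp


noncomputable def e4 : (ZMod 2 × ZMod 2) ≃ Fin 4 :=
  Fintype.equivFinOfCardEq (by rw [Fintype.card_prod, ZMod.card])

noncomputable def Pp : XX ≃ (ℤ → Fin 4) where
  toFun z := fun i => e4 (z.1 i, z.2 i)
  invFun y := (fun i => (e4.symm (y i)).1, fun i => (e4.symm (y i)).2)
  left_inv z := by
    refine Prod.ext ?_ ?_ <;> · funext i; simp
  right_inv y := by
    funext i; simp

lemma Pp_measurable : Measurable ⇑Pp := by
  apply measurable_pi_lambda
  intro i
  exact Measurable.comp' (measurable_of_countable (fun q : ZMod 2 × ZMod 2 => e4 q))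
    (Measurable.prodMk (Measurable.comp' (measurable_pi_apply i) measurable_fst)
      (Measurable.comp' (measurable_pi_apply i) measurable_snd))

lemma Pp_symm_measurable : Measurable ⇑Pp.symm := by
  apply Measurable.prodMk
  · apply measurable_pi_lambda
    intro i
    exact (measurable_of_countable (fun v : Fin 4 => (e4.symm v).1)).comp (measurable_pi_apply i)
  · apply measurable_pi_lambda
    intro i
    exact (measurable_of_countable (fun v : Fin 4 => (e4.symm v).2)).comp (measurable_pi_apply i)

noncomputable def nu4 : Measure (ℤ → Fin 4) := mu.map ⇑Pp

instance : IsProbabilityMeasure nu4 := Measure.isProbabilityMeasure_map Pp_measurable.aemeasurable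

lemma cyl4_measurable (s : Finset ℤ) (f : ℤ → Fin 4) :
    MeasurableSet {x : ℤ → Fin 4 | ∀ i ∈ s, x i = f i} := by
  have : {x : ℤ → Fin 4 | ∀ i ∈ s, x i = f i} = ⋂ i ∈ s, (fun x : ℤ → Fin 4 => x i) ⁻¹' {f i} := by
    ext x; simp
  rw [this]
  exact MeasurableSet.biInter s.countable_toSet
    (fun i _ => (measurable_pi_apply i) (measurableSet_singleton (f i)))

lemma nu4_cyl (s : Finset ℤ) (f : ℤ → Fin 4) :
    nu4 {x | ∀ i ∈ s, x i = f i} = ENNReal.ofReal (∏ _i ∈ s, (1/4 : ℝ)) := by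
  rw [nu4, Measure.map_apply Pp_measurable (cyl4_measurable s f)]
  have hpre : ⇑Pp ⁻¹' {x | ∀ i ∈ s, x i = f i} =
      (cyl s (fun i => (e4.symm (f i)).1)) ×ˢ (cyl s (fun i => (e4.symm (f i)).2)) := by
    ext z
    simp only [Set.mem_preimage, Set.mem_setOf_eq, Set.mem_prod, cyl]
    constructor
    · intro h
      constructor <;> intro i hi <;>
      · have := h i hi
        have h2 : (z.1 i, z.2 i) = e4.symm (f i) := by
          rw [← this]
          exact (Equiv.symm_apply_apply e4 _).symm
        first
        | exact congrArg Prod.fst h2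
        | exact congrArg Prod.snd h2
    · rintro ⟨h1, h2⟩ i hi
      show e4 (z.1 i, z.2 i) = f i
      rw [h1 i hi, h2 i hi]
      simp
  rw [hpre, mu, Measure.prod_prod, nu_cyl, nu_cyl]
  rw [Finset.prod_const]
  rw [← mul_pow]
  have h1 : ((2 : ENNReal)⁻¹ * 2⁻¹) = ENNReal.ofReal (1/4 : ℝ) := by
    rw [← ENNReal.mul_inv (by norm_num) (by norm_num)]
    rw [show ((2 : ENNReal) * 2) = 4 from by norm_num]
    rw [show ((1:ℝ)/4) = (4 : ℝ)⁻¹ from by norm_num]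
    rw [ENNReal.ofReal_inv_of_pos (by norm_num)]
    norm_num
  rw [h1, ← ENNReal.ofReal_pow (by norm_num)]

lemma Pp_shift (w : XX) : Pp (sig w) = fun i => Pp w (i + 1) := by
  funext i
  show e4 ((sig w).1 i, (sig w).2 i) = e4 (w.1 (i+1), w.2 (i+1))
  have h1 : (sig w).1 i = w.1 (i + 1) := sh_apply w.1 i
  have h2 : (sig w).2 i = w.2 (i + 1) := sh_apply w.2 i
  rw [h1, h2]

lemma isBernoulli_of_conj (e : Equiv.Perm XX) (he : MeasurePreserving ⇑e mu mu)
    (hes : MeasurePreserving ⇑e.symm mu mu) :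
    IsBernoulli mu ⇑(e * sig * e⁻¹) := by
  refine ⟨4, by norm_num, fun _ => 1/4, fun _ => by norm_num, ?_, nu4, inferInstance,
    nu4_cyl, fun z => Pp (e.symm z), fun y => e (Pp.symm y), ?_, ?_, ?_, ?_, ?_⟩
  · simp
  · exact (MeasurePreserving.mk Pp_measurable rfl).comp hes
  · refine MeasurePreserving.comp (f := ⇑Pp.symm) (g := ⇑e) he ?_
    refine ⟨Pp_symm_measurable, ?_⟩
    rw [nu4, Measure.map_map Pp_symm_measurable Pp_measurable]
    have : ⇑Pp.symm ∘ ⇑Pp = id := by funext z; simp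
    rw [this, Measure.map_id]
  · apply ae_of_all
    intro z
    simp
  · apply ae_of_all
    intro y
    simp
  · apply ae_of_all
    intro z
    show Pp (e.symm ((e * sig * e⁻¹) z)) = fun i => Pp (e.symm z) (i + 1)
    have h1 : (e * sig * e⁻¹) z = e (sig (e.symm z)) := rfl
    rw [h1]
    have h2 : e.symm (e (sig (e.symm z))) = sig (e.symm z) := Equiv.symm_apply_apply _ _
    rw [h2, Pp_shift]


lemma TT_bernoulli (kk : ℤ ≃ ℤ) (u : ℤ → ZMod 2) : IsBernoulli mu ⇑(TT kk u) := by
  have h1 : MeasurePreserving ⇑(Equiv.prodCongr (theta kk u) (Equiv.refl Om)) mu mu :=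
    prodCongr_mp _ _ (theta_mp _ _) (MeasurePreserving.id nu)
  have h2 : MeasurePreserving ⇑(Equiv.prodCongr (theta kk u) (Equiv.refl Om)).symm mu mu := by
    have : ⇑(Equiv.prodCongr (theta kk u) (Equiv.refl Om)).symm
        = Prod.map ⇑(theta kk u).symm ⇑(Equiv.refl Om) := by funext z; rfl
    rw [this, mu]
    exact (theta_symm_mp _ _).prod (MeasurePreserving.id nu)
  exact isBernoulli_of_conj _ h1 h2

lemma SS'_bernoulli (pp : ℤ ≃ ℤ) (w : ℤ → ZMod 2) : IsBernoulli mu ⇑(SS' pp w) := by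
  have h1 : MeasurePreserving ⇑(Equiv.prodCongr (Equiv.refl Om) (theta pp w)) mu mu :=
    prodCongr_mp _ _ (MeasurePreserving.id nu) (theta_mp _ _)
  have h2 : MeasurePreserving ⇑(Equiv.prodCongr (Equiv.refl Om) (theta pp w)).symm mu mu := by
    have : ⇑(Equiv.prodCongr (Equiv.refl Om) (theta pp w)).symm
        = Prod.map ⇑(Equiv.refl Om) ⇑(theta pp w).symm := by funext z; rfl
    rw [this, mu]
    exact (MeasurePreserving.id nu).prod (theta_symm_mp _ _)
  exact isBernoulli_of_conj _ h1 h2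


end Aux

/-- Non-convergence and non-recurrence: for injective `a, b : ℕ → ℤ∖{0}` there are Bernoulli
transformations `T, S` and bounded functions `f, g` such that the correlation averages
diverge, and a positive measure set `A` with `μ(T^{-a(n)}A ∩ S^{-b(n)}A) = 0` for all `n`. -/
theorem nonconvergence_and_nonrecurrence
    (a b : ℕ → ℤ) (ha0 : ∀ n, a n ≠ 0) (hb0 : ∀ n, b n ≠ 0)
    (hainj : Function.Injective a) (hbinj : Function.Injective b) :
    ∃ (X : Type) (_ : MeasurableSpace X) (μ : Measure X) (_ : IsProbabilityMeasure μ)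
      (T S : Equiv.Perm X),
      MeasurePreserving T μ μ ∧ MeasurePreserving S μ μ ∧
      IsBernoulli μ T ∧ IsBernoulli μ S ∧
      (∃ (f g : X → ℝ) (C : ℝ),
        Measurable f ∧ Measurable g ∧ (∀ x, |f x| ≤ C) ∧ (∀ x, |g x| ≤ C) ∧
        ¬ ∃ l : ℝ, Tendsto (fun N : ℕ => (N : ℝ)⁻¹ *
            ∑ n ∈ Finset.Icc 1 N, ∫ x, f ((T ^ a n) x) * g ((S ^ b n) x) ∂μ)
          atTop (nhds l)) ∧
      ∃ A : Set X, MeasurableSet A ∧ 0 < μ A ∧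
        ∀ n : ℕ, μ ((T ^ a n) ⁻¹' A ∩ (S ^ b n) ⁻¹' A) = 0 := by
  obtain ⟨pi, hpi0, hpiE, hpiNE⟩ := exists_match a b hainj hbinj ha0 hb0 {n | Pblk n}
    Pblk_compl_infinite
  obtain ⟨ka, hka0, hkaE, -⟩ := exists_match b a hbinj hainj hb0 ha0 ({n | Pblk n}ᶜ)
    (by rw [compl_compl]; exact Pblk_infinite)
  set w2 : ℤ → ZMod 2 := Set.indicator {z : ℤ | ∃ m, Pblk m ∧ a m = z} (fun _ => 1) with hw2
  set u1 : ℤ → ZMod 2 := Set.indicator {z : ℤ | ∃ m, ¬ Pblk m ∧ b m = z} (fun _ => 1) with hu1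
  have hw2_0 : w2 0 = 0 := Set.indicator_of_notMem
    (show (0:ℤ) ∉ {z : ℤ | ∃ m, Pblk m ∧ a m = z} by rintro ⟨m, _, hm⟩; exact ha0 m hm) _
  have hu1_0 : u1 0 = 0 := Set.indicator_of_notMem
    (show (0:ℤ) ∉ {z : ℤ | ∃ m, ¬ Pblk m ∧ b m = z} by rintro ⟨m, _, hm⟩; exact hb0 m hm) _
  have hw2_a : ∀ n, Pblk n → w2 (a n) = 1 := fun n hn =>
    Set.indicator_of_mem (show a n ∈ {z : ℤ | ∃ m, Pblk m ∧ a m = z} from ⟨n, hn, rfl⟩) _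
  have hu1_b : ∀ n, ¬ Pblk n → u1 (b n) = 1 := fun n hn =>
    Set.indicator_of_mem (show b n ∈ {z : ℤ | ∃ m, ¬ Pblk m ∧ b m = z} from ⟨n, hn, rfl⟩) _
  set T : Equiv.Perm XX := TT ka u1 with hT
  set S : Equiv.Perm XX := SS' pi w2 with hS
  -- coordinates of powers
  have hTsnd : ∀ (m : ℤ) (z : XX), ((T ^ m) z).2 0 = z.2 m := by
    intro m z
    rw [hT, TT_zpow_snd, zero_add]
  have hSfst : ∀ (m : ℤ) (z : XX), ((S ^ m) z).1 0 = z.1 m := by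
    intro m z
    rw [hS, SS'_zpow_fst, zero_add]
  have hTfst : ∀ (m : ℤ) (z : XX), ((T ^ m) z).1 0 = u1 0 + (z.1 (ka.symm m) - u1 (ka.symm m)) :=
    fun m z => TT_zpow_fst_zero ka u1 hka0 m z
  have hSsnd : ∀ (m : ℤ) (z : XX), ((S ^ m) z).2 0 = w2 0 + (z.2 (pi.symm m) - w2 (pi.symm m)) :=
    fun m z => SS'_zpow_snd_zero pi w2 hpi0 m z
  -- the set A
  set A : Set XX := (cyl {0} (fun _ => 1)) ×ˢ (cyl {0} (fun _ => 1)) with hA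
  have hmemA : ∀ z : XX, z ∈ A ↔ (z.1 0 = 1 ∧ z.2 0 = 1) := by
    intro z
    rw [hA, Set.mem_prod]
    simp [cyl]
  have hAmeas : MeasurableSet A := (cyl_measurable _ _).prod (cyl_measurable _ _)
  have hApos : 0 < mu A := by
    rw [hA, mu, Measure.prod_prod, nu_cyl]
    simp only [Finset.card_singleton, pow_one]
    norm_num
  -- functions
  set f : XX → ℝ := fun z => rr (z.2 0) with hf
  have hfmeas : Measurable f :=
    (measurable_of_countable rr).comp ((measurable_pi_apply 0).comp measurable_snd)
  -- correlation values
  have hγ : ∀ n, Pblk n → pi.symm (b n) = a n := by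
    intro n hn
    rw [← hpiE n hn, Equiv.symm_apply_apply]
  have hγne : ∀ n, ¬ Pblk n → pi.symm (b n) ≠ a n := by
    intro n hn hcon
    exact hpiNE n hn (by rw [← hcon, Equiv.apply_symm_apply])
  have hzm1 : ∀ v : ZMod 2, (0 : ZMod 2) + (v - 1) = 1 + v := by decide
  have hzm2 : ∀ (p q v : ZMod 2), p + (v - q) = (p - q) + v := by decide
  have hcorr : ∀ n : ℕ, (∫ z, f ((T ^ a n) z) * f ((S ^ b n) z) ∂mu)
      = if Pblk n then -(4⁻¹:ℝ) else 0 := by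
    intro n
    by_cases hn : Pblk n
    · rw [if_pos hn]
      have hint : (fun z : XX => f ((T ^ a n) z) * f ((S ^ b n) z)) =
          fun z => (fun x : Om => rr (x (a n)) * rr (1 + x (a n))) z.2 := by
        funext z
        rw [hf]
        simp only
        rw [hTsnd, hSsnd, hγ n hn, hw2_0, hw2_a n hn, hzm1]
      have hmeasF : Measurable (fun x : Om => rr (x (a n)) * rr (1 + x (a n))) :=
        ((measurable_of_countable rr).comp (measurable_pi_apply (a n))).mul
          ((measurable_of_countable rr).comp
            ((measurable_of_countable (fun v : ZMod 2 => (1 : ZMod 2) + v)).comp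
              (measurable_pi_apply (a n))))
      rw [hint, integral_snd _ hmeasF, integral_rr_const]
      norm_num
    · rw [if_neg hn]
      set γ : ℤ := pi.symm (b n) with hγdef
      have hint : (fun z : XX => f ((T ^ a n) z) * f ((S ^ b n) z)) =
          fun z => (fun x : Om => rr (x (a n)) * rr ((w2 0 - w2 γ) + x γ)) z.2 := by
        funext z
        rw [hf]
        simp only
        rw [hTsnd, hSsnd, ← hγdef, hzm2]
      have hmeasF : Measurable (fun x : Om => rr (x (a n)) * rr ((w2 0 - w2 γ) + x γ)) :=
        ((measurable_of_countable rr).comp (measurable_pi_apply (a n))).mul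
          ((measurable_of_countable rr).comp
            ((measurable_of_countable (fun v : ZMod 2 => (w2 0 - w2 γ) + v)).comp
              (measurable_pi_apply γ)))
      rw [hint, integral_snd _ hmeasF,
        integral_rr_indep (a n) γ (fun h => hγne n hn h.symm) (w2 0 - w2 γ)]
  refine ⟨XX, inferInstance, mu, inferInstance, T, S, TT_mp ka u1, SS'_mp pi w2,
    TT_bernoulli ka u1, SS'_bernoulli pi w2, ⟨f, f, 1/2, hfmeas, hfmeas,
      fun z => rr_bound _, fun z => rr_bound _, ?_⟩, A, hAmeas, hApos, ?_⟩
  · -- divergence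
    have hfun : (fun N : ℕ => (N : ℝ)⁻¹ *
        ∑ n ∈ Finset.Icc 1 N, ∫ z, f ((T ^ a n) z) * f ((S ^ b n) z) ∂mu) =
        fun N : ℕ => (N:ℝ)⁻¹ * (-(4⁻¹:ℝ) * (cnt N : ℝ)) := by
      funext N
      congr 1
      rw [Finset.sum_congr rfl (fun n _ => hcorr n), ← Finset.sum_filter,
        Finset.sum_const, nsmul_eq_mul, mul_comm]
      rfl
    rw [hfun]
    exact no_limit
  · -- non-recurrence
    intro n
    have hempty : ((T ^ a n) ⁻¹' A ∩ (S ^ b n) ⁻¹' A) = ∅ := by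
      rw [Set.eq_empty_iff_forall_notMem]
      rintro z ⟨h1, h2⟩
      rw [Set.mem_preimage, hmemA] at h1 h2
      by_cases hn : Pblk n
      · have e1 : z.2 (a n) = 1 := by rw [← hTsnd (a n) z]; exact h1.2
        have e2 := h2.2
        rw [hSsnd, hγ n hn, hw2_0, hw2_a n hn, e1] at e2
        rw [show ((0:ZMod 2) + ((1:ZMod 2) - 1)) = 0 from by decide] at e2
        exact absurd e2 (by decide)
      · have e1 : z.1 (b n) = 1 := by rw [← hSfst (b n) z]; exact h2.1
        have e2 := h1.1
        have hkab : ka.symm (a n) = b n := by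
          rw [← hkaE n hn, Equiv.symm_apply_apply]
        rw [hTfst, hkab, hu1_0, hu1_b n hn, e1] at e2
        rw [show ((0:ZMod 2) + ((1:ZMod 2) - 1)) = 0 from by decide] at e2
        exact absurd e2 (by decide)
    rw [hempty]
    exact measure_empty
end

section
/- Let σ_n = n^{−a} for some a ∈ (0,1), let (X_n) be independent with ℙ(X_n = 1) = σ_n, ℙ(X_n = 0) = 1 − σ_n, and let a_n(ω) be the n-th element of {k : X_k(ω) = 1} in increasing order. Then almost surely, a_n(ω)/n^{1/(1−a)} converges to a nonzero constant as n → ∞. -/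
open Filter MeasureTheory ProbabilityTheory Finset Topology ENNReal

noncomputable def bb (a : ℝ) (N : ℕ) : ℝ := ∑ i ∈ Finset.Icc 1 N, (i : ℝ) ^ (-a)

variable {a : ℝ}

lemma bb_mono : Monotone (bb a) := by
  intro m n hmn
  exact Finset.sum_le_sum_of_subset_of_nonneg (Finset.Icc_subset_Icc_right hmn)
    (fun i _ _ => Real.rpow_nonneg (Nat.cast_nonneg i) _)

lemma integral_seg (ha : a ∈ Set.Ioo (0:ℝ) 1) (c d : ℝ) :
    ∫ x in c..d, x ^ (-a) = (d ^ (1 - a) - c ^ (1 - a)) / (1 - a) := by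
  rw [integral_rpow (Or.inl (by linarith [ha.2]))]
  ring_nf

lemma rpow_intable (ha : a ∈ Set.Ioo (0:ℝ) 1) (c d : ℝ) :
    IntervalIntegrable (fun x : ℝ => x ^ (-a)) volume c d :=
  intervalIntegral.intervalIntegrable_rpow' (by linarith [ha.2])

lemma bb_eq (N : ℕ) : bb a N = ∑ j ∈ Finset.range N, ((j : ℝ) + 1) ^ (-a) := by
  induction N with
  | zero => simp [bb]
  | succ n ih =>
    rw [bb, Finset.sum_Icc_succ_top (Nat.one_le_iff_ne_zero.mpr (Nat.succ_ne_zero n)),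
      ← bb, ih, Finset.sum_range_succ]
    push_cast
    ring

lemma term_le_integral (ha : a ∈ Set.Ioo (0:ℝ) 1) (j : ℕ) :
    ((j : ℝ) + 1) ^ (-a) ≤ ∫ x in (j : ℝ)..((j : ℝ) + 1), x ^ (-a) := by
  rcases Nat.eq_zero_or_pos j with hj | hj
  · subst hj
    rw [integral_seg ha]
    simp only [Nat.cast_zero, zero_add, Real.one_rpow, Real.rpow_natCast]
    rw [Real.zero_rpow (by linarith [ha.2] : (1:ℝ) - a ≠ 0)]
    have h1 : (0:ℝ) < 1 - a := by linarith [ha.2]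
    rw [sub_zero, le_div_iff₀ h1]
    linarith [ha.1]
  · have h0 : (0:ℝ) < (j:ℝ) := by exact_mod_cast hj
    calc ((j : ℝ) + 1) ^ (-a) = ∫ _x in (j : ℝ)..((j : ℝ) + 1), ((j:ℝ)+1) ^ (-a) := by
          rw [intervalIntegral.integral_const]; simp
      _ ≤ ∫ x in (j : ℝ)..((j : ℝ) + 1), x ^ (-a) := by
          apply intervalIntegral.integral_mono_on (by linarith) (by simp [intervalIntegrable_const]) (rpow_intable ha _ _)
          intro x hx
          exact Real.rpow_le_rpow_of_nonpos (by linarith [hx.1]) hx.2 (by linarith [ha.1])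

lemma integral_le_term (ha : a ∈ Set.Ioo (0:ℝ) 1) (j : ℕ) :
    (∫ x in ((j : ℝ) + 1)..((j : ℝ) + 2), x ^ (-a)) ≤ ((j : ℝ) + 1) ^ (-a) := by
  calc (∫ x in ((j : ℝ) + 1)..((j : ℝ) + 2), x ^ (-a))
      ≤ ∫ _x in ((j : ℝ) + 1)..((j : ℝ) + 2), ((j:ℝ)+1) ^ (-a) := by
        apply intervalIntegral.integral_mono_on (by linarith) (rpow_intable ha _ _)
          (intervalIntegrable_const)
        intro x hx
        exact Real.rpow_le_rpow_of_nonpos (by positivity) hx.1 (by linarith [ha.1])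
    _ = ((j : ℝ) + 1) ^ (-a) := by rw [intervalIntegral.integral_const]; ring_nf

lemma bb_le (ha : a ∈ Set.Ioo (0:ℝ) 1) (N : ℕ) :
    bb a N ≤ (N : ℝ) ^ (1 - a) / (1 - a) := by
  have tel : ∑ j ∈ Finset.range N, (∫ x in ((j:ℕ):ℝ)..((j+1 : ℕ):ℝ), x ^ (-a))
      = ∫ x in ((0:ℕ):ℝ)..((N:ℕ):ℝ), x ^ (-a) :=
    intervalIntegral.sum_integral_adjacent_intervals (fun k _ => rpow_intable ha _ _)
  rw [bb_eq]
  calc ∑ j ∈ Finset.range N, ((j : ℝ) + 1) ^ (-a)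
      ≤ ∑ j ∈ Finset.range N, ∫ x in ((j:ℕ):ℝ)..((j+1 : ℕ):ℝ), x ^ (-a) := by
        apply Finset.sum_le_sum
        intro j _
        have := term_le_integral ha j
        push_cast
        convert this using 2
    _ = ∫ x in ((0:ℕ):ℝ)..((N:ℕ):ℝ), x ^ (-a) := tel
    _ = (N : ℝ) ^ (1 - a) / (1 - a) := by
        rw [integral_seg ha]
        norm_num
        rw [Real.zero_rpow (by linarith [ha.2] : (1:ℝ) - a ≠ 0)]
        ring

lemma le_bb (ha : a ∈ Set.Ioo (0:ℝ) 1) (N : ℕ) :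
    (((N : ℝ) + 1) ^ (1 - a) - 1) / (1 - a) ≤ bb a N := by
  have tel : ∑ j ∈ Finset.range N, (∫ x in ((j+1:ℕ):ℝ)..((j+2 : ℕ):ℝ), x ^ (-a))
      = ∫ x in ((0+1:ℕ):ℝ)..((N+1:ℕ):ℝ), x ^ (-a) :=
    intervalIntegral.sum_integral_adjacent_intervals (a := fun k => ((k+1:ℕ):ℝ))
      (fun k _ => rpow_intable ha _ _)
  rw [bb_eq]
  calc (((N : ℝ) + 1) ^ (1 - a) - 1) / (1 - a)
      = ∫ x in ((0+1:ℕ):ℝ)..((N+1:ℕ):ℝ), x ^ (-a) := by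
        rw [integral_seg ha]
        push_cast
        norm_num
    _ = ∑ j ∈ Finset.range N, ∫ x in ((j+1:ℕ):ℝ)..((j+2 : ℕ):ℝ), x ^ (-a) := tel.symm
    _ ≤ ∑ j ∈ Finset.range N, ((j : ℝ) + 1) ^ (-a) := by
        apply Finset.sum_le_sum
        intro j _
        have := integral_le_term ha j
        push_cast
        convert this using 2 <;> push_cast <;> ring

lemma Npow_pos (ha : a ∈ Set.Ioo (0:ℝ) 1) {N : ℕ} (hN : 1 ≤ N) : (0:ℝ) < (N:ℝ) ^ (1-a) :=
  Real.rpow_pos_of_pos (by exact_mod_cast hN) _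

lemma bb_div_tendsto (ha : a ∈ Set.Ioo (0:ℝ) 1) :
    Tendsto (fun N : ℕ => bb a N / (N:ℝ) ^ (1-a)) atTop (𝓝 (1/(1-a))) := by
  have h1a : (0:ℝ) < 1 - a := by linarith [ha.2]
  -- lower bound function tendsto
  have hg : Tendsto (fun N : ℕ => (((N:ℝ)+1) ^ (1-a) - 1) / (N:ℝ) ^ (1-a)) atTop (𝓝 1) := by
    have hratio : Tendsto (fun N : ℕ => ((N:ℝ)+1)/(N:ℝ)) atTop (𝓝 1) := by
      have h0 : Tendsto (fun N : ℕ => 1 + 1/(N:ℝ)) atTop (𝓝 (1+0)) :=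
        tendsto_const_nhds.add tendsto_one_div_atTop_nhds_zero_nat
      rw [add_zero] at h0
      apply h0.congr'
      filter_upwards [eventually_ge_atTop 1] with N hN
      have : (N:ℝ) ≠ 0 := Nat.cast_ne_zero.mpr (by omega)
      field_simp
    have hcont : ContinuousAt (fun x : ℝ => x ^ (1-a)) 1 :=
      Real.continuousAt_rpow_const 1 (1-a) (Or.inl one_ne_zero)
    have hrp : Tendsto (fun N : ℕ => (((N:ℝ)+1)/(N:ℝ)) ^ (1-a)) atTop (𝓝 1) := by
      have := hcont.tendsto.comp hratio
      simpa [Real.one_rpow, Function.comp_def] using this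
    have hneg : Tendsto (fun N : ℕ => (N:ℝ) ^ (-(1-a))) atTop (𝓝 0) :=
      (tendsto_rpow_neg_atTop h1a).comp tendsto_natCast_atTop_atTop
    have := hrp.sub hneg
    rw [sub_zero] at this
    apply this.congr'
    filter_upwards [eventually_ge_atTop 1] with N hN
    have hN0 : (0:ℝ) < (N:ℝ) := by exact_mod_cast hN
    rw [Real.div_rpow (by positivity) hN0.le, Real.rpow_neg hN0.le, sub_div]
    congr 1
    rw [inv_eq_one_div]
  have hlow : Tendsto (fun N : ℕ => ((((N:ℝ)+1) ^ (1-a) - 1) / (1-a)) / (N:ℝ) ^ (1-a))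
      atTop (𝓝 (1/(1-a))) := by
    have := hg.div_const (1-a)
    apply this.congr
    intro N; ring
  apply tendsto_of_tendsto_of_tendsto_of_le_of_le' hlow tendsto_const_nhds
  · filter_upwards [eventually_ge_atTop 1] with N hN
    have hp := Npow_pos ha hN
    have := le_bb ha N
    gcongr
  · filter_upwards [eventually_ge_atTop 1] with N hN
    have hp := Npow_pos ha hN
    calc bb a N / (N:ℝ) ^ (1-a) ≤ ((N:ℝ) ^ (1-a) / (1-a)) / (N:ℝ) ^ (1-a) := by
          have := bb_le ha N; gcongr
      _ = 1/(1-a) := by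
          field_simp

lemma one_le_bb (ha : a ∈ Set.Ioo (0:ℝ) 1) {N : ℕ} (hN : 1 ≤ N) : 1 ≤ bb a N := by
  have h1 : (1:ℕ) ∈ Finset.Icc 1 N := by simp [hN]
  have := Finset.single_le_sum (f := fun i : ℕ => (i:ℝ) ^ (-a))
    (fun i _ => Real.rpow_nonneg (Nat.cast_nonneg i) _) h1
  simpa [bb] using this

lemma bb_pos (ha : a ∈ Set.Ioo (0:ℝ) 1) {N : ℕ} (hN : 1 ≤ N) : 0 < bb a N :=
  lt_of_lt_of_le one_pos (one_le_bb ha hN)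

lemma bb_atTop (ha : a ∈ Set.Ioo (0:ℝ) 1) : Tendsto (bb a) atTop atTop := by
  have h1a : (0:ℝ) < 1 - a := by linarith [ha.2]
  apply tendsto_atTop_mono (le_bb ha)
  apply Tendsto.atTop_div_const h1a
  apply tendsto_atTop_add_const_right
  apply (tendsto_rpow_atTop h1a).comp
  exact tendsto_atTop_add_const_right _ 1 tendsto_natCast_atTop_atTop

lemma pow_succ_div_tendsto (m : ℕ) :
    Tendsto (fun j : ℕ => (((j+2:ℕ)^m : ℕ):ℝ) / (((j+1:ℕ)^m : ℕ):ℝ)) atTop (𝓝 1) := by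
  have hratio : Tendsto (fun j : ℕ => ((j:ℝ)+2)/((j:ℝ)+1)) atTop (𝓝 1) := by
    have h0 : Tendsto (fun j : ℕ => 1 + 1/((j:ℝ)+1)) atTop (𝓝 (1+0)) := by
      apply tendsto_const_nhds.add
      apply tendsto_one_div_atTop_nhds_zero_nat.comp (tendsto_add_atTop_nat 1) |>.congr
      intro j
      simp only [Function.comp_apply]
      push_cast
      ring
    rw [add_zero] at h0
    apply h0.congr
    intro j
    have : ((j:ℝ)+1) ≠ 0 := by positivity
    field_simp; ring
  have hcont : ContinuousAt (fun x : ℝ => x ^ m) 1 := (continuous_pow m).continuousAt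
  have := hcont.tendsto.comp hratio
  rw [one_pow] at this
  apply this.congr
  intro j
  simp only [Function.comp_apply]
  rw [div_pow]
  push_cast
  ring

lemma bb_ratio_tendsto (ha : a ∈ Set.Ioo (0:ℝ) 1) {m : ℕ} (hm : 1 ≤ m) :
    Tendsto (fun j : ℕ => bb a ((j+2)^m) / bb a ((j+1)^m)) atTop (𝓝 1) := by
  have h1a : (0:ℝ) < 1 - a := by linarith [ha.2]
  have hm2 : ∀ j : ℕ, (1:ℕ) ≤ (j+2)^m := fun j => Nat.one_le_pow _ _ (by omega)
  have hm1 : ∀ j : ℕ, (1:ℕ) ≤ (j+1)^m := fun j => Nat.one_le_pow _ _ (by omega)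
  have hT2 : Tendsto (fun j : ℕ => (j+2)^m) atTop atTop := by
    apply tendsto_atTop_mono (fun j => ?_) tendsto_id
    calc (j : ℕ) ≤ j + 2 := by omega
      _ ≤ (j+2)^m := by
          exact Nat.le_self_pow (by omega) _
  have hT1 : Tendsto (fun j : ℕ => (j+1)^m) atTop atTop := by
    apply tendsto_atTop_mono (fun j => ?_) tendsto_id
    calc (j : ℕ) ≤ j + 1 := by omega
      _ ≤ (j+1)^m := Nat.le_self_pow (by omega) _
  have f1 : Tendsto (fun j : ℕ => bb a ((j+2)^m) / (((j+2)^m : ℕ):ℝ) ^ (1-a))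
      atTop (𝓝 (1/(1-a))) := (bb_div_tendsto ha).comp hT2
  have f3' : Tendsto (fun j : ℕ => bb a ((j+1)^m) / (((j+1)^m : ℕ):ℝ) ^ (1-a))
      atTop (𝓝 (1/(1-a))) := (bb_div_tendsto ha).comp hT1
  have f3 : Tendsto (fun j : ℕ => (((j+1)^m : ℕ):ℝ) ^ (1-a) / bb a ((j+1)^m))
      atTop (𝓝 (1-a)) := by
    have := f3'.inv₀ (by positivity)
    simp only [one_div, inv_inv] at this
    apply this.congr
    intro j
    rw [inv_div]
  have f2 : Tendsto (fun j : ℕ => (((j+2)^m : ℕ):ℝ) ^ (1-a) / (((j+1)^m : ℕ):ℝ) ^ (1-a))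
      atTop (𝓝 1) := by
    have hcont : ContinuousAt (fun x : ℝ => x ^ (1-a)) 1 :=
      Real.continuousAt_rpow_const 1 (1-a) (Or.inl one_ne_zero)
    have := hcont.tendsto.comp (pow_succ_div_tendsto m)
    rw [Real.one_rpow] at this
    apply this.congr
    intro j
    simp only [Function.comp_apply]
    rw [Real.div_rpow (by positivity) (by positivity)]
  have hprod := (f1.mul f2).mul f3
  have heq : (1/(1-a)) * 1 * (1-a) = 1 := by field_simp
  rw [heq] at hprod
  apply hprod.congr
  intro j
  have p1 : (0:ℝ) < (((j+1)^m : ℕ):ℝ) ^ (1-a) := by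
    apply Real.rpow_pos_of_pos
    exact_mod_cast Nat.one_le_pow _ _ (by omega)
  have p2 : (0:ℝ) < (((j+2)^m : ℕ):ℝ) ^ (1-a) := by
    apply Real.rpow_pos_of_pos
    exact_mod_cast Nat.one_le_pow _ _ (by omega)
  have hbpos : 0 < bb a ((j+1)^m) := bb_pos ha (Nat.one_le_pow _ _ (by omega))
  field_simp

lemma interp (ha : a ∈ Set.Ioo (0:ℝ) 1) {m : ℕ} (hm : 1 ≤ m) (g : ℕ → ℝ)
    (hgmono : Monotone g) (hg0 : ∀ n, 0 ≤ g n)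
    (hsub : Tendsto (fun j : ℕ => g ((j+1)^m) / bb a ((j+1)^m)) atTop (𝓝 1)) :
    Tendsto (fun n : ℕ => g n / bb a n) atTop (𝓝 1) := by
  set J : ℕ → ℕ := fun n => Nat.findGreatest (fun j => (j+1)^m ≤ n) n with hJ
  have hJ1 : ∀ n : ℕ, 1 ≤ n → (J n + 1)^m ≤ n := by
    intro n hn
    have h := Nat.findGreatest_spec (P := fun j => (j+1)^m ≤ n) (m := 0)
      (Nat.zero_le n) (by simpa using hn)
    exact h
  have hJ2 : ∀ n : ℕ, n < (J n + 2)^m := by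
    intro n
    by_cases h : J n + 1 ≤ n
    · have := Nat.findGreatest_is_greatest (P := fun j => (j+1)^m ≤ n) (n := n)
        (Nat.lt_succ_self (J n)) h
      simp only [not_le] at this
      calc n < (J n + 1 + 1)^m := this
        _ = (J n + 2)^m := by ring_nf
    · push_neg at h
      calc n ≤ J n + 1 := by omega
        _ < J n + 2 := by omega
        _ ≤ (J n + 2)^m := Nat.le_self_pow (by omega) _
  have hJtop : Tendsto J atTop atTop := by
    rw [tendsto_atTop_atTop]
    intro c
    refine ⟨(c+1)^m, fun n hn => ?_⟩
    apply Nat.le_findGreatest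
    · calc c ≤ (c+1)^m := le_trans (by omega) (Nat.le_self_pow (by omega) _)
        _ ≤ n := hn
    · exact hn
  have hratio := bb_ratio_tendsto ha hm
  have hrinv : Tendsto (fun j : ℕ => bb a ((j+1)^m) / bb a ((j+2)^m)) atTop (𝓝 1) := by
    have := hratio.inv₀ one_ne_zero
    rw [inv_one] at this
    apply this.congr
    intro j; rw [inv_div]
  -- upper and lower comparison functions
  have hup : Tendsto (fun j : ℕ => (g ((j+2)^m) / bb a ((j+2)^m)) * (bb a ((j+2)^m) / bb a ((j+1)^m)))
      atTop (𝓝 1) := by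
    have h1 : Tendsto (fun j : ℕ => g ((j+2)^m) / bb a ((j+2)^m)) atTop (𝓝 1) := by
      have := hsub.comp (tendsto_add_atTop_nat 1)
      apply this.congr
      intro j
      simp only [Function.comp_apply]
    simpa using h1.mul hratio
  have hlow : Tendsto (fun j : ℕ => (g ((j+1)^m) / bb a ((j+1)^m)) * (bb a ((j+1)^m) / bb a ((j+2)^m)))
      atTop (𝓝 1) := by simpa using hsub.mul hrinv
  apply tendsto_of_tendsto_of_tendsto_of_le_of_le' (hlow.comp hJtop) (hup.comp hJtop)
  · -- lower bound
    filter_upwards [eventually_ge_atTop 1] with n hn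
    simp only [Function.comp_apply]
    have hb1 : 0 < bb a ((J n + 1)^m) := bb_pos ha (Nat.one_le_pow _ _ (by omega))
    have hb2 : 0 < bb a ((J n + 2)^m) := bb_pos ha (Nat.one_le_pow _ _ (by omega))
    have hbn : 0 < bb a n := bb_pos ha hn
    have hcancel : (g ((J n+1)^m) / bb a ((J n+1)^m)) * (bb a ((J n+1)^m) / bb a ((J n+2)^m))
        = g ((J n+1)^m) / bb a ((J n+2)^m) := by
      rw [div_mul_div_comm, mul_comm (g ((J n+1)^m)) _, mul_div_mul_left _ _ hb1.ne']
    rw [hcancel]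
    apply div_le_div₀ (hg0 n) (hgmono (hJ1 n hn)) hbn (bb_mono (le_of_lt (hJ2 n)))
  · -- upper bound
    filter_upwards [eventually_ge_atTop 1] with n hn
    simp only [Function.comp_apply]
    have hb1 : 0 < bb a ((J n + 1)^m) := bb_pos ha (Nat.one_le_pow _ _ (by omega))
    have hb2 : 0 < bb a ((J n + 2)^m) := bb_pos ha (Nat.one_le_pow _ _ (by omega))
    have hbn : 0 < bb a n := bb_pos ha hn
    have hcancel : (g ((J n+2)^m) / bb a ((J n+2)^m)) * (bb a ((J n+2)^m) / bb a ((J n+1)^m))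
        = g ((J n+2)^m) / bb a ((J n+1)^m) := by
      rw [div_mul_div_comm, mul_comm (g ((J n+2)^m)) _, mul_div_mul_left _ _ hb2.ne']
    rw [hcancel]
    apply div_le_div₀ (hg0 _) (hgmono (le_of_lt (hJ2 n))) hb1 (bb_mono (hJ1 n hn))

set_option maxHeartbeats 1000000 in
lemma slln {Ω : Type*} [MeasurableSpace Ω] (μ : Measure Ω) [IsProbabilityMeasure μ]
    {a : ℝ} (ha : a ∈ Set.Ioo (0:ℝ) 1)
    (X : ℕ → Ω → ℕ) (hmeas : ∀ n, Measurable (X n))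
    (h01 : ∀ n ω, X n ω = 0 ∨ X n ω = 1)
    (hind : iIndepFun X μ)
    (hP : ∀ n : ℕ, 1 ≤ n → μ {ω | X n ω = 1} = ENNReal.ofReal ((n : ℝ) ^ (-a)))
    {m : ℕ} (hm2 : (2:ℝ) ≤ (m:ℝ) * (1 - a)) (hm1 : 1 ≤ m) :
    ∀ᵐ ω ∂μ, Tendsto (fun N : ℕ => (∑ i ∈ Finset.Icc 1 N, (X i ω : ℝ)) / bb a N)
      atTop (𝓝 1) := by
  have h1a : (0:ℝ) < 1 - a := by linarith [ha.2]
  set Y : ℕ → Ω → ℝ := fun i ω => (X i ω : ℝ) with hY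
  have hYmeas : ∀ i, Measurable (Y i) := fun i => measurable_from_top.comp (hmeas i)
  have hYbd : ∀ i ω, ‖Y i ω‖ ≤ 1 := by
    intro i ω; rcases h01 i ω with h|h <;> simp [hY, h]
  have hL2 : ∀ i, MemLp (Y i) 2 μ := fun i =>
    MemLp.of_bound (hYmeas i).aestronglyMeasurable 1 (Eventually.of_forall (hYbd i))
  have hInt : ∀ i, Integrable (Y i) μ := fun i => (hL2 i).integrable one_le_two
  have hYind : iIndepFun Y μ :=
    hind.comp (fun _ => (Nat.cast : ℕ → ℝ)) (fun _ => measurable_from_top)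
  have hmean : ∀ i : ℕ, 1 ≤ i → μ[Y i] = (i:ℝ) ^ (-a) := by
    intro i hi
    have hset : MeasurableSet {ω | X i ω = 1} := hmeas i (measurableSet_singleton 1)
    have hYi : Y i = Set.indicator {ω | X i ω = 1} (fun _ => (1:ℝ)) := by
      funext ω
      rcases h01 i ω with h|h <;> simp [hY, h, Set.indicator_apply]
    rw [hYi, integral_indicator_const _ hset, measureReal_def, hP i hi, smul_eq_mul, mul_one,
      ENNReal.toReal_ofReal (Real.rpow_nonneg (Nat.cast_nonneg i) _)]
  have hsq : ∀ i, Y i ^ 2 = Y i := by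
    intro i; funext ω; rcases h01 i ω with h|h <;> simp [hY, h]
  have hvar : ∀ i : ℕ, 1 ≤ i → variance (Y i) μ ≤ (i:ℝ) ^ (-a) := by
    intro i hi
    rw [variance_eq_sub (hL2 i), hsq, hmean i hi]
    nlinarith [sq_nonneg ((i:ℝ) ^ (-a))]
  set S : ℕ → Ω → ℝ := fun N ω => ∑ i ∈ Finset.Icc 1 N, Y i ω with hS
  have hSL2 : ∀ N, MemLp (S N) 2 μ := fun N => memLp_finset_sum _ (fun i _ => hL2 i)
  have hSmean : ∀ N, μ[S N] = bb a N := by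
    intro N
    rw [hS]
    rw [integral_finset_sum _ (fun i _ => hInt i)]
    exact Finset.sum_congr rfl (fun i hi => hmean i (Finset.mem_Icc.mp hi).1)
  have hSvar : ∀ N, variance (S N) μ ≤ bb a N := by
    intro N
    have heqf : S N = ∑ i ∈ Finset.Icc 1 N, Y i := by
      funext ω; rw [hS]; simp [Finset.sum_apply]
    rw [heqf, IndepFun.variance_sum (fun i _ => hL2 i)
      (fun i _ j _ hij => hYind.indepFun hij)]
    exact Finset.sum_le_sum (fun i hi => hvar i (Finset.mem_Icc.mp hi).1)
  set NN : ℕ → ℕ := fun j => (j+1)^m with hNN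
  have hNN1 : ∀ j, 1 ≤ NN j := fun j => Nat.one_le_pow _ _ (by omega)
  have hbbNN : ∀ j : ℕ, ((j:ℝ))^2 ≤ bb a (NN j) := by
    intro j
    have hcast : ((NN j : ℕ):ℝ) = ((j:ℝ)+1)^m := by rw [hNN]; push_cast; ring
    have hrw : ((NN j : ℕ):ℝ) ^ (1-a) = ((j:ℝ)+1) ^ ((m:ℝ)*(1-a)) := by
      rw [hcast, ← Real.rpow_natCast ((j:ℝ)+1) m, ← Real.rpow_mul (by positivity)]
    have h2 : ((j:ℝ)+1) ^ ((2:ℕ):ℝ) ≤ ((j:ℝ)+1) ^ ((m:ℝ)*(1-a)) :=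
      Real.rpow_le_rpow_of_exponent_le (by linarith [Nat.cast_nonneg (α := ℝ) j]) (by push_cast; linarith)
    rw [Real.rpow_natCast] at h2
    have h3 : ((NN j :ℕ):ℝ) ^ (1-a) - 1 ≤ bb a (NN j) := by
      have hl := le_bb ha (NN j)
      have hmono : ((NN j:ℕ):ℝ) ^ (1-a) ≤ (((NN j:ℕ):ℝ) + 1) ^ (1-a) :=
        Real.rpow_le_rpow (Nat.cast_nonneg _) (by linarith) h1a.le
      have hge1 : (1:ℝ) ≤ ((NN j:ℕ):ℝ) ^ (1-a) := by
        have := Real.rpow_le_rpow (zero_le_one) (Nat.one_le_cast.mpr (hNN1 j)) h1a.le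
        rwa [Real.one_rpow] at this
      have key : ((NN j:ℕ):ℝ) ^ (1-a) - 1 ≤ ((((NN j:ℕ):ℝ) + 1) ^ (1-a) - 1) / (1-a) := by
        rw [le_div_iff₀ h1a]
        nlinarith [hge1, hmono, ha.1, ha.2]
      linarith
    rw [hrw] at h3
    nlinarith [Nat.cast_nonneg (α := ℝ) j]
  set E : ℕ → ℕ → Set Ω :=
    fun m' j => {ω | (1/((m':ℝ)+1)) * bb a (NN j) ≤ |S (NN j) ω - bb a (NN j)|} with hE
  have hEbound : ∀ m' j, μ (E m' j) ≤ ENNReal.ofReal (((m':ℝ)+1)^2 / bb a (NN j)) := by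
    intro m' j
    have hbpos : 0 < bb a (NN j) := bb_pos ha (hNN1 j)
    have hc : 0 < (1/((m':ℝ)+1)) * bb a (NN j) := by positivity
    have cheb := meas_ge_le_variance_div_sq (hSL2 (NN j)) hc
    rw [hSmean (NN j)] at cheb
    refine le_trans cheb (ENNReal.ofReal_le_ofReal ?_)
    have hc2 : (0:ℝ) < ((1/((m':ℝ)+1)) * bb a (NN j))^2 := by positivity
    calc variance (S (NN j)) μ / ((1/((m':ℝ)+1)) * bb a (NN j))^2
        ≤ bb a (NN j) / ((1/((m':ℝ)+1)) * bb a (NN j))^2 := by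
          have := hSvar (NN j); gcongr
      _ = ((m':ℝ)+1)^2 / bb a (NN j) := by
          have hb : bb a (NN j) ≠ 0 := hbpos.ne'
          have hmne : ((m':ℝ)+1) ≠ 0 := by positivity
          rw [mul_pow, div_pow, one_pow, div_eq_div_iff (by positivity) hbpos.ne']
          field_simp
  have hsummable : ∀ m' : ℕ, Summable (fun j => ((m':ℝ)+1)^2 / bb a (NN j)) := by
    intro m'
    have base : Summable (fun j : ℕ => ((m':ℝ)+1)^2 * ((1:ℝ)/((j+1:ℕ):ℝ)^2)) := by
      have h := (summable_nat_add_iff (f := fun n : ℕ => 1/(n:ℝ)^2) 1).mpr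
        (Real.summable_one_div_nat_pow.mpr (by norm_num))
      exact (h.mul_left (((m':ℝ)+1)^2)).congr (fun j => by push_cast; ring)
    have h1 : Summable (fun j : ℕ => ((m':ℝ)+1)^2 / bb a (NN (j+1))) := by
      apply Summable.of_nonneg_of_le _ _ base
      · exact fun j => div_nonneg (by positivity) (bb_pos ha (hNN1 _)).le
      · intro j
        have h1 : ((j+1:ℕ):ℝ)^2 ≤ bb a (NN (j+1)) := by exact_mod_cast hbbNN (j+1)
        have h2 : (0:ℝ) < ((j+1:ℕ):ℝ)^2 := by positivity
        rw [div_eq_mul_one_div]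
        apply mul_le_mul_of_nonneg_left _ (by positivity)
        rw [div_le_div_iff₀ (lt_of_lt_of_le h2 h1) h2]
        nlinarith
    exact (summable_nat_add_iff (f := fun j : ℕ => ((m':ℝ)+1)^2 / bb a (NN j)) 1).mp h1
  have hsum : ∀ m' : ℕ, (∑' j, μ (E m' j)) ≠ ∞ := by
    intro m'
    apply ne_of_lt
    calc ∑' j, μ (E m' j) ≤ ∑' j, ENNReal.ofReal (((m':ℝ)+1)^2 / bb a (NN j)) :=
          ENNReal.tsum_le_tsum (hEbound m')
      _ = ENNReal.ofReal (∑' j, ((m':ℝ)+1)^2 / bb a (NN j)) :=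
          (ENNReal.ofReal_tsum_of_nonneg (fun j => by
            have := bb_pos ha (hNN1 j); positivity) (hsummable m')).symm
      _ < ∞ := ENNReal.ofReal_lt_top
  have hBC : ∀ᵐ ω ∂μ, ∀ m' : ℕ, ∀ᶠ j in atTop, ω ∉ E m' j :=
    ae_all_iff.mpr (fun m' => ae_eventually_notMem (hsum m'))
  filter_upwards [hBC] with ω hω
  have hsubconv : Tendsto (fun j : ℕ => S (NN j) ω / bb a (NN j)) atTop (𝓝 1) := by
    rw [Metric.tendsto_atTop]
    intro ε hε
    obtain ⟨m', hm'⟩ := exists_nat_one_div_lt hε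
    obtain ⟨J, hJ⟩ := (hω m').exists_forall_of_atTop
    refine ⟨J, fun j hj => ?_⟩
    have hnot := hJ j hj
    rw [hE] at hnot
    simp only [Set.mem_setOf_eq, not_le] at hnot
    have hbpos : 0 < bb a (NN j) := bb_pos ha (hNN1 j)
    rw [Real.dist_eq]
    have heq : S (NN j) ω / bb a (NN j) - 1 = (S (NN j) ω - bb a (NN j)) / bb a (NN j) := by
      field_simp
    rw [heq, abs_div, abs_of_pos hbpos, div_lt_iff₀ hbpos]
    calc |S (NN j) ω - bb a (NN j)| < (1/((m':ℝ)+1)) * bb a (NN j) := hnot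
      _ ≤ ε * bb a (NN j) := by
          apply mul_le_mul_of_nonneg_right (le_of_lt hm') hbpos.le
  have hgmono : Monotone (fun n => S n ω) := by
    intro p q hpq
    exact Finset.sum_le_sum_of_subset_of_nonneg (Finset.Icc_subset_Icc_right hpq)
      (fun i _ _ => by positivity)
  have hg0 : ∀ n, 0 ≤ S n ω := fun n => Finset.sum_nonneg (fun i _ => by positivity)
  exact interp ha hm1 (fun n => S n ω) hgmono hg0 hsubconv

/-- For independent Bernoulli variables with `ℙ(X_n = 1) = n^{-a}`, `a ∈ (0,1)`, the
enumeration `a_n(ω)` of `{k : X_k(ω) = 1}` satisfies almost surely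
`a_n(ω)/n^{1/(1-a)} →` a nonzero constant. -/
theorem random_sequence_growth
    {Ω : Type*} [MeasurableSpace Ω] (μ : Measure Ω) [IsProbabilityMeasure μ]
    (a : ℝ) (ha : a ∈ Set.Ioo (0 : ℝ) 1)
    (X : ℕ → Ω → ℕ) (hmeas : ∀ n, Measurable (X n))
    (h01 : ∀ n ω, X n ω = 0 ∨ X n ω = 1)
    (hind : iIndepFun X μ)
    (hP : ∀ n : ℕ, 1 ≤ n → μ {ω | X n ω = 1} = ENNReal.ofReal ((n : ℝ) ^ (-a)))
    (seq : ℕ → Ω → ℕ)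
    (hseq : ∀ n ω, seq n ω = sInf {k : ℕ | ∑ i ∈ Finset.Icc 1 k, X i ω = n}) :
    ∀ᵐ ω ∂μ, ∃ c : ℝ, c ≠ 0 ∧
      Tendsto (fun n : ℕ => (seq n ω : ℝ) / (n : ℝ) ^ (1 / (1 - a)))
        atTop (nhds c) := by
  have h1a : (0:ℝ) < 1 - a := by linarith [ha.2]
  set m : ℕ := ⌈2/(1-a)⌉₊ with hmdef
  have hm2 : (2:ℝ) ≤ (m:ℝ) * (1 - a) := by
    have h := Nat.le_ceil (2/(1-a))
    rw [← hmdef] at h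
    rw [div_le_iff₀ h1a] at h
    linarith [h]
  have hm1 : 1 ≤ m := by
    rw [hmdef]
    apply Nat.one_le_ceil_iff.mpr
    positivity
  filter_upwards [slln μ ha X hmeas h01 hind hP hm2 hm1] with ω hω
  set Sf : ℕ → ℕ := fun k => ∑ i ∈ Finset.Icc 1 k, X i ω with hSf
  have hcast : ∀ k, ((Sf k : ℕ):ℝ) = ∑ i ∈ Finset.Icc 1 k, (X i ω : ℝ) := by
    intro k; rw [hSf]; push_cast; rfl
  have hω' : Tendsto (fun N : ℕ => ((Sf N : ℕ):ℝ) / bb a N) atTop (𝓝 1) := by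
    apply hω.congr; intro N; rw [hcast]
  have hStop : Tendsto (fun N : ℕ => ((Sf N : ℕ):ℝ)) atTop atTop := by
    have hmul := Tendsto.pos_mul_atTop one_pos hω' (bb_atTop ha)
    apply hmul.congr'
    filter_upwards [eventually_ge_atTop 1] with N hN
    exact div_mul_cancel₀ _ (bb_pos ha hN).ne'
  have hexists : ∀ n : ℕ, ∃ k, Sf k = n := by
    intro n
    have hub : ∃ k, n ≤ Sf k := by
      have := (hStop.eventually_ge_atTop (n:ℝ)).exists
      obtain ⟨k, hk⟩ := this
      exact ⟨k, by exact_mod_cast hk⟩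
    have hspec : n ≤ Sf (Nat.find hub) := Nat.find_spec hub
    rcases hfind : Nat.find hub with _ | k'
    · rw [hfind] at hspec
      have h0 : Sf 0 = 0 := by rw [hSf]; simp
      exact ⟨0, by omega⟩
    · have hmin : ¬ (n ≤ Sf k') := Nat.find_min hub (by omega)
      rw [hfind] at hspec
      have hstep : Sf (k' + 1) = Sf k' + X (k'+1) ω := by
        rw [hSf]
        exact Finset.sum_Icc_succ_top (by omega) _
      have hX1 : X (k'+1) ω ≤ 1 := by rcases h01 (k'+1) ω with h|h <;> omega
      exact ⟨k' + 1, by omega⟩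
  have hSfseq : ∀ n, Sf (seq n ω) = n := by
    intro n
    have hne : {k : ℕ | Sf k = n}.Nonempty := hexists n
    have := Nat.sInf_mem hne
    rw [hseq n ω]
    exact this
  have hSfle : ∀ k, Sf k ≤ k := by
    intro k
    rw [hSf]
    calc ∑ i ∈ Finset.Icc 1 k, X i ω ≤ ∑ _i ∈ Finset.Icc 1 k, 1 :=
          Finset.sum_le_sum (fun i _ => by rcases h01 i ω with h|h <;> omega)
      _ = k := by simp
  have hge : ∀ n, n ≤ seq n ω := by
    intro n
    have h := hSfle (seq n ω)
    rw [hSfseq n] at h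
    exact h
  have htop : Tendsto (fun n => seq n ω) atTop atTop :=
    tendsto_atTop_mono hge tendsto_id
  have h1 : Tendsto (fun n : ℕ => (n:ℝ) / bb a (seq n ω)) atTop (𝓝 1) := by
    have := hω'.comp htop
    apply this.congr
    intro n
    simp only [Function.comp_apply]
    rw [hSfseq n]
  have h2 : Tendsto (fun n : ℕ => bb a (seq n ω) / ((seq n ω : ℕ):ℝ) ^ (1-a))
      atTop (𝓝 (1/(1-a))) := (bb_div_tendsto ha).comp htop
  have h3 : Tendsto (fun n : ℕ => (n:ℝ) / ((seq n ω : ℕ):ℝ) ^ (1-a))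
      atTop (𝓝 (1/(1-a))) := by
    have hmul := h1.mul h2
    rw [one_mul] at hmul
    apply hmul.congr'
    filter_upwards [eventually_ge_atTop 1] with n hn
    have hb : bb a (seq n ω) ≠ 0 := (bb_pos ha (le_trans hn (hge n))).ne'
    rw [div_mul_div_comm, mul_comm ((n:ℝ)) _, mul_div_mul_left _ _ hb]
  have h4 : Tendsto (fun n : ℕ => ((seq n ω : ℕ):ℝ) ^ (1-a) / (n:ℝ))
      atTop (𝓝 (1-a)) := by
    have := h3.inv₀ (by positivity)
    rw [one_div, inv_inv] at this
    apply this.congr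
    intro n
    rw [inv_div]
  have hcont : ContinuousAt (fun x : ℝ => x ^ ((1-a)⁻¹)) (1-a) :=
    Real.continuousAt_rpow_const _ _ (Or.inl h1a.ne')
  have h5 := (hcont.tendsto).comp h4
  refine ⟨(1-a) ^ ((1-a)⁻¹), (Real.rpow_pos_of_pos h1a _).ne', ?_⟩
  apply h5.congr'
  filter_upwards [eventually_ge_atTop 1] with n hn
  simp only [Function.comp_apply]
  rw [one_div, Real.div_rpow (Real.rpow_nonneg (Nat.cast_nonneg _) _) (Nat.cast_nonneg n),
    Real.rpow_rpow_inv (Nat.cast_nonneg _) h1a.ne']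
end
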